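/- arXiv:1210.4230 — 3 statements merged into one kernel-verified Lean document; each statement's English description precedes it below -/
import Mathlib

section
/- The Hilbert function of R/Ĩ(s,t) for 2 ≤ s ≤ t is H(d) = (d·Σ_{j=1}^s (r_j − 1) + 1) · C(d + r_{t+1}⋯r_n − 1, d) · Π_{i=s+1}^t C(d + r_i − 1, d). Equivalently: the number of distinct monomials of degree d in R modulo Ĩ(s,t) equals this expression, where a monomial Π_{i=1}^d x_{a_i} is determined by the quantity Σ_i ‖a_i‖_s, the multisets {a_{1,i},…,a_{d,i}} for i = s+1,…,t, and the multiset of tuples (a_{j,t+1},…,a_{j,n}). -/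
open Finset

/-- The set of indices: `a i` (a value in `Fin (r i)`) represents the entry `a_i = (a i) + 1`
of an index in `[r 1] × ⋯ × [r n]`.  So `0` corresponds to the entry `1` and `r i - 1`
to the entry `r i`. -/
abbrev Idx (n : ℕ) (r : Fin n → ℕ) := ∀ i : Fin n, Fin (r i)

/-- `a` and `b` are `s`-equivalent: equal sums of the first `s` components and equal
remaining components. -/
def sEquiv (n s : ℕ) (r : Fin n → ℕ) (a b : Idx n r) : Prop :=
  (∑ i ∈ Finset.univ.filter (fun i : Fin n => (i : ℕ) < s), (a i : ℕ)) =
    (∑ i ∈ Finset.univ.filter (fun i : Fin n => (i : ℕ) < s), (b i : ℕ)) ∧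
  ∀ i : Fin n, s ≤ (i : ℕ) → a i = b i

/-- The switch of `a` and `b` with respect to a single component `i`. -/
def sw {n : ℕ} {r : Fin n → ℕ} (i : Fin n) (a b : Idx n r) : Idx n r :=
  fun j => if j = i then b j else a j

/-- The switch of `a` and `b` with respect to a set `L` of components. -/
def swL {n : ℕ} {r : Fin n → ℕ} (L : Finset (Fin n)) (a b : Idx n r) : Idx n r :=
  fun j => if j ∈ L then b j else a j

/-- An `(s,t)`-switchable subset of the set of indices. -/
def Switchable (n s t : ℕ) (r : Fin n → ℕ) (S : Set (Idx n r)) : Prop :=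
  (∀ a b, a ∈ S → b ∈ S → hammingDist a b = 2 →
    ∀ i : Fin n, (i : ℕ) < t → sw i a b ∈ S) ∧
  (∀ a b, a ∈ S → sEquiv n s r a b → b ∈ S)

/-- `c 0, c 1, …, c k` is a path in `S`: all members lie in `S` and consecutive members
have Hamming distance `1`. -/
def IsPathIn {n : ℕ} {r : Fin n → ℕ} (S : Set (Idx n r)) (c : ℕ → Idx n r) (k : ℕ) : Prop :=
  (∀ j ≤ k, c j ∈ S) ∧ ∀ j < k, hammingDist (c j) (c (j + 1)) = 1

/-- `a` and `b` are connected in `S`. -/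
def ConnectedIn {n : ℕ} {r : Fin n → ℕ} (S : Set (Idx n r)) (a b : Idx n r) : Prop :=
  ∃ k c, c 0 = a ∧ c k = b ∧ IsPathIn S c k

/-- The setoid of `s`-equivalence on the set of indices. -/
def sSetoid (n s : ℕ) (r : Fin n → ℕ) : Setoid (Idx n r) where
  r := sEquiv n s r
  iseqv := ⟨fun _ => ⟨rfl, fun _ _ => rfl⟩,
    fun h => ⟨h.1.symm, fun i hi => (h.2 i hi).symm⟩,
    fun h g => ⟨h.1.trans g.1, fun i hi => (h.2 i hi).trans (g.2 i hi)⟩⟩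

/-- The variables of the ring `R` are indexed by `s`-equivalence classes of indices,
i.e. `x a = x b` iff `a` and `b` are `s`-equivalent. -/
abbrev IQ (n s : ℕ) (r : Fin n → ℕ) := Quotient (sSetoid n s r)

/-- The variable `x_a` of the polynomial ring `R = k[x_a : a ∈ N]`. -/
noncomputable def xvar (k : Type) [CommRing k] {n : ℕ} (s : ℕ) {r : Fin n → ℕ}
    (a : Idx n r) : MvPolynomial (IQ n s r) k :=
  MvPolynomial.X (Quotient.mk (sSetoid n s r) a)

/-- The generalized `2 × 2` minor `f_{i,a,b} = x_a x_b − x_{sw(i,a,b)} x_{sw(i,b,a)}`. -/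
noncomputable def gminor (k : Type) [CommRing k] {n : ℕ} (s : ℕ) {r : Fin n → ℕ}
    (i : Fin n) (a b : Idx n r) : MvPolynomial (IQ n s r) k :=
  xvar k s a * xvar k s b - xvar k s (sw i a b) * xvar k s (sw i b a)

/-- The ideal `I(s,t)`, generated by the slice minors `f_{i,a,b}` with `d(a,b) = 2`
and `i ∈ [t]`. -/
noncomputable def ISlice (k : Type) [CommRing k] {n : ℕ} (s t : ℕ) (r : Fin n → ℕ) :
    Ideal (MvPolynomial (IQ n s r) k) :=
  Ideal.span {f | ∃ i : Fin n, ∃ a b : Idx n r,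
    (i : ℕ) < t ∧ hammingDist a b = 2 ∧ f = gminor k s i a b}

/-- The ideal `Ĩ(s,t)`, generated by all generalized minors `f_{i,a,b}` with `i ∈ [t]`. -/
noncomputable def ITilde (k : Type) [CommRing k] {n : ℕ} (s t : ℕ) (r : Fin n → ℕ) :
    Ideal (MvPolynomial (IQ n s r) k) :=
  Ideal.span {f | ∃ i : Fin n, ∃ a b : Idx n r, (i : ℕ) < t ∧ f = gminor k s i a b}

/-- The ideal `Ĩ(s,t)_S`, generated by the generalized minors `f_{i,a,b}` with `i ∈ [t]`
and `a, b` connected in `S`. -/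
noncomputable def ITildeS (k : Type) [CommRing k] {n : ℕ} (s t : ℕ) {r : Fin n → ℕ}
    (S : Set (Idx n r)) : Ideal (MvPolynomial (IQ n s r) k) :=
  Ideal.span {f | ∃ i : Fin n, ∃ a b : Idx n r,
    (i : ℕ) < t ∧ ConnectedIn S a b ∧ f = gminor k s i a b}

section HilbertAux

open MvPolynomial

variable {k : Type} [CommRing k] {n s t : ℕ} {r : Fin n → ℕ}

/-- head coordinates -/
def headF (n s : ℕ) : Finset (Fin n) := Finset.univ.filter (fun i : Fin n => (i : ℕ) < s)

/-- middle coordinates -/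
def midFin (n s t : ℕ) : Finset (Fin n) :=
  Finset.univ.filter (fun i : Fin n => s ≤ (i : ℕ) ∧ (i : ℕ) < t)

/-- head sum -/
def hsum (s : ℕ) (a : Idx n r) : ℕ := ∑ i ∈ headF n s, (a i : ℕ)

/-- head capacity -/
def capC (n s : ℕ) (r : Fin n → ℕ) : ℕ := ∑ i ∈ headF n s, (r i - 1)

lemma hsum_le (hr : ∀ i, 2 ≤ r i) (a : Idx n r) : hsum s a ≤ capC n s r := by
  apply Finset.sum_le_sum
  intro i _
  have := (a i).isLt
  have := hr i
  omega

lemma exists_vec (F : Finset (Fin n)) (N : ℕ) (hN : N ≤ ∑ i ∈ F, (r i - 1)) :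
    ∃ v : Fin n → ℕ, (∀ i, v i ≤ r i - 1) ∧ (∀ i ∉ F, v i = 0) ∧ ∑ i ∈ F, v i = N := by
  induction F using Finset.induction_on generalizing N with
  | empty =>
    refine ⟨fun _ => 0, by simp, by simp, by simp only [Finset.sum_empty]; simp only [Finset.sum_empty] at hN; omega⟩
  | insert i F hi ih =>
    rw [Finset.sum_insert hi] at hN
    obtain ⟨v, hv1, hv2, hv3⟩ := ih (N - min (r i - 1) N) (by omega)
    refine ⟨Function.update v i (min (r i - 1) N), ?_, ?_, ?_⟩
    · intro j
      rcases eq_or_ne j i with rfl | hji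
      · rw [Function.update_self]; omega
      · simp [Function.update_of_ne hji, hv1 j]
    · intro j hj
      have hji : j ≠ i := by rintro rfl; exact hj (Finset.mem_insert_self _ _)
      rw [Function.update_of_ne hji]
      exact hv2 j (fun hjF => hj (Finset.mem_insert_of_mem hjF))
    · rw [Finset.sum_insert hi, Function.update_self]
      have : ∑ j ∈ F, Function.update v i (min (r i - 1) N) j = ∑ j ∈ F, v j := by
        apply Finset.sum_congr rfl
        intro j hj
        exact Function.update_of_ne (by rintro rfl; exact hi hj) _ _
      rw [this, hv3]
      omega

/-- realize a head sum with prescribed upper coordinates -/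
lemma exists_head (hr : ∀ i, 2 ≤ r i) (g : Idx n r) (N : ℕ) (hN : N ≤ capC n s r) :
    ∃ a : Idx n r, (∀ i : Fin n, s ≤ (i : ℕ) → a i = g i) ∧ hsum s a = N := by
  obtain ⟨v, hv1, hv2, hv3⟩ := exists_vec (headF n s) N hN
  refine ⟨fun i => if h : (i : ℕ) < s then ⟨v i, by have := hr i; have := hv1 i; omega⟩
    else g i, ?_, ?_⟩
  · intro i hi; exact dif_neg (by omega)
  · unfold hsum
    rw [← hv3]
    apply Finset.sum_congr rfl
    intro i hi
    simp only [headF, Finset.mem_filter] at hi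
    simp [hi.2]

/-- realize a head sum with prescribed upper coordinates and prescribed value at one
head coordinate -/
lemma exists_head_at (hr : ∀ i, 2 ≤ r i) (g : Idx n r) (i0 : Fin n) (hi0 : (i0 : ℕ) < s)
    (a N : ℕ) (ha : a ≤ r i0 - 1) (haN : a ≤ N)
    (hrest : N ≤ a + ∑ i ∈ (headF n s).erase i0, (r i - 1)) :
    ∃ p : Idx n r, (∀ i : Fin n, s ≤ (i : ℕ) → p i = g i) ∧ (p i0 : ℕ) = a ∧ hsum s p = N := by
  obtain ⟨v, hv1, hv2, hv3⟩ := exists_vec (r := r) ((headF n s).erase i0) (N - a) (by omega)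
  have hi0m : i0 ∈ headF n s := by simp [headF, hi0]
  set w : Fin n → ℕ := Function.update v i0 a with hw
  have hwlt : ∀ i, w i < r i := by
    intro i
    rcases eq_or_ne i i0 with rfl | hne
    · rw [hw, Function.update_self]; have := hr i; omega
    · rw [hw, Function.update_of_ne hne]; have := hr i; have := hv1 i; omega
  refine ⟨fun i => if h : (i : ℕ) < s then ⟨w i, hwlt i⟩ else g i, ?_, ?_, ?_⟩
  · intro i hi; exact dif_neg (by omega)
  · show ((if h : (i0:ℕ) < s then (⟨w i0, hwlt i0⟩ : Fin (r i0)) else g i0 : Fin (r i0)) : ℕ) = a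
    rw [dif_pos hi0]
    show w i0 = a
    rw [hw]; exact Function.update_self ..
  · unfold hsum
    have hcongr : ∀ i ∈ headF n s, ((if h : (i : ℕ) < s then (⟨w i, hwlt i⟩ : Fin (r i))
        else g i : Fin (r i)) : ℕ) = w i := by
      intro i hi
      simp only [headF, Finset.mem_filter] at hi
      simp [hi.2]
    rw [Finset.sum_congr rfl hcongr, ← Finset.add_sum_erase _ _ hi0m]
    have : ∑ i ∈ (headF n s).erase i0, w i = ∑ i ∈ (headF n s).erase i0, v i := by
      apply Finset.sum_congr rfl
      intro i hi
      rw [hw]; exact Function.update_of_ne (Finset.ne_of_mem_erase hi) _ _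
    rw [this, hv3, Function.update_self]
    omega

end HilbertAux
section HilbertMoves

open MvPolynomial

variable {k : Type} [CommRing k] {n s t : ℕ} {r : Fin n → ℕ}

variable (k s) in
/-- image of a multiset of indices in the quotient ring -/
noncomputable def Pm (t : ℕ) (m : Multiset (Idx n r)) :
    MvPolynomial (IQ n s r) k ⧸ ITilde k s t r :=
  Ideal.Quotient.mk _ ((m.map (xvar k s)).prod)

variable (k s) in
/-- image of a pair -/
noncomputable def Qp (t : ℕ) (u v : Idx n r) :
    MvPolynomial (IQ n s r) k ⧸ ITilde k s t r :=
  Ideal.Quotient.mk _ (xvar k s u * xvar k s v)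

lemma xvar_congr {a b : Idx n r} (h : sEquiv n s r a b) : xvar k s a = xvar k s b :=
  congrArg MvPolynomial.X (Quot.sound h)

lemma sEquiv_of (a b : Idx n r) (h1 : hsum s a = hsum s b)
    (h2 : ∀ i : Fin n, s ≤ (i : ℕ) → a i = b i) : sEquiv n s r a b := ⟨h1, h2⟩

lemma Qp_swap (i : Fin n) (hi : (i : ℕ) < t) (a b : Idx n r) :
    Qp k s t a b = Qp k s t (sw i a b) (sw i b a) := by
  unfold Qp
  rw [Ideal.Quotient.eq]
  exact Ideal.subset_span ⟨i, a, b, hi, rfl⟩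

lemma Qp_comm (u v : Idx n r) : Qp k s t u v = Qp k s t v u := by
  unfold Qp; rw [mul_comm]

lemma Qp_congr {u v u' v' : Idx n r} (h1 : sEquiv n s r u u') (h2 : sEquiv n s r v v') :
    Qp k s t u v = Qp k s t u' v' := by
  unfold Qp; rw [xvar_congr h1, xvar_congr h2]

lemma Pm_zero : Pm k s t (0 : Multiset (Idx n r)) = 1 := by
  simp [Pm]

lemma Pm_cons (a : Idx n r) (m : Multiset (Idx n r)) :
    Pm k s t (a ::ₘ m) = Ideal.Quotient.mk _ (xvar k s a) * Pm k s t m := by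
  simp [Pm, Multiset.map_cons, Multiset.prod_cons, map_mul]

lemma Pm_pair (u v : Idx n r) (w : Multiset (Idx n r)) {u' v' : Idx n r}
    (h : Qp k s t u v = Qp k s t u' v') :
    Pm k s t (u ::ₘ v ::ₘ w) = Pm k s t (u' ::ₘ v' ::ₘ w) := by
  have e : ∀ x y : Idx n r, Pm k s t (x ::ₘ y ::ₘ w) = Qp k s t x y * Pm k s t w := by
    intro x y
    rw [Pm_cons, Pm_cons, ← mul_assoc, Qp, map_mul]
  rw [e, e, h]

lemma Pm_congr_head {a b : Idx n r} (h : sEquiv n s r a b) (m : Multiset (Idx n r)) :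
    Pm k s t (a ::ₘ m) = Pm k s t (b ::ₘ m) := by
  rw [Pm_cons, Pm_cons, xvar_congr h]

/-- the fundamental one-swap move with re-representation -/
lemma move (hr : ∀ i, 2 ≤ r i) (hst : s ≤ t) (i0 : Fin n) (hi0 : (i0 : ℕ) < s)
    (u v u' v' : Idx n r)
    (hu : ∀ i : Fin n, s ≤ (i : ℕ) → u' i = u i) (hv : ∀ i : Fin n, s ≤ (i : ℕ) → v' i = v i)
    (a b : ℕ) (ha1 : a ≤ r i0 - 1) (hb1 : b ≤ r i0 - 1)
    (ha2 : a ≤ hsum s u) (hb2 : b ≤ hsum s v)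
    (ha3 : hsum s u ≤ a + ∑ i ∈ (headF n s).erase i0, (r i - 1))
    (hb3 : hsum s v ≤ b + ∑ i ∈ (headF n s).erase i0, (r i - 1))
    (hu' : hsum s u' + a = hsum s u + b) (hv' : hsum s v' + b = hsum s v + a) :
    Qp k s t u v = Qp k s t u' v' := by
  obtain ⟨p, hp1, hp2, hp3⟩ := exists_head_at hr u i0 hi0 a (hsum s u) ha1 ha2 ha3
  obtain ⟨q, hq1, hq2, hq3⟩ := exists_head_at hr v i0 hi0 b (hsum s v) hb1 hb2 hb3
  have hi0m : i0 ∈ headF n s := by simp [headF, hi0]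
  have key : ∀ (x y : Idx n r) (c e : ℕ), (x i0 : ℕ) = c → (y i0 : ℕ) = e →
      hsum s (sw i0 x y) + c = hsum s x + e := by
    intro x y c e hc he
    unfold hsum
    rw [← Finset.add_sum_erase _ _ hi0m, ← Finset.add_sum_erase _ (fun j => ((x j : ℕ)))  hi0m]
    have h1 : ((sw i0 x y i0 : ℕ)) = e := by rw [sw, if_pos rfl, he]
    have h2 : ∑ i ∈ (headF n s).erase i0, ((sw i0 x y i : ℕ)) =
        ∑ i ∈ (headF n s).erase i0, ((x i : ℕ)) := by
      apply Finset.sum_congr rfl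
      intro j hj
      rw [sw, if_neg (Finset.ne_of_mem_erase hj)]
    rw [h1, h2, hc]
    ring
  have hswu : ∀ i : Fin n, s ≤ (i : ℕ) → sw i0 p q i = p i := by
    intro i hi
    rw [sw, if_neg (by rintro rfl; omega)]
  have hswv : ∀ i : Fin n, s ≤ (i : ℕ) → sw i0 q p i = q i := by
    intro i hi
    rw [sw, if_neg (by rintro rfl; omega)]
  calc Qp k s t u v = Qp k s t p q := by
        refine Qp_congr (sEquiv_of _ _ hp3.symm ?_) (sEquiv_of _ _ hq3.symm ?_)
        · intro i hi; exact (hp1 i hi).symm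
        · intro i hi; exact (hq1 i hi).symm
    _ = Qp k s t (sw i0 p q) (sw i0 q p) := Qp_swap i0 (by omega) p q
    _ = Qp k s t u' v' := by
        refine Qp_congr (sEquiv_of _ _ ?_ ?_) (sEquiv_of _ _ ?_ ?_)
        · have := key p q a b hp2 hq2
          omega
        · intro i hi; rw [hswu i hi, hp1 i hi, hu i hi]
        · have := key q p b a hq2 hp2
          omega
        · intro i hi; rw [hswv i hi, hq1 i hi, hv i hi]

end HilbertMoves
section HilbertOneStep

open MvPolynomial

variable {k : Type} [CommRing k] {n s t : ℕ} {r : Fin n → ℕ}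

lemma typeA_plan (hr : ∀ i, 2 ≤ r i) (hst : s ≤ t) (i0 : Fin n) (hi0 : (i0 : ℕ) < s)
    (u v u' v' : Idx n r)
    (hu : ∀ i : Fin n, s ≤ (i : ℕ) → u' i = u i) (hv : ∀ i : Fin n, s ≤ (i : ℕ) → v' i = v i)
    (hN' : hsum s u' = hsum s u + 1) (hM' : hsum s v' + 1 = hsum s v)
    (hNC : hsum s u + 1 ≤ capC n s r)
    (hAi : capC n s r + hsum s v ≤ (r i0 - 1) + hsum s u)
    (hciNM : (r i0 - 1) + hsum s v ≤ hsum s u) :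
    Qp k s t u v = Qp k s t u' v' := by
  have hi0m : i0 ∈ headF n s := by simp [headF, hi0]
  set N := hsum s u with hN
  set M := hsum s v with hM
  set c := r i0 - 1 with hc
  set E := ∑ i ∈ (headF n s).erase i0, (r i - 1) with hE
  have hcE : c + E = capC n s r := by
    rw [hc, hE]; unfold capC; exact Finset.add_sum_erase _ (fun i => r i - 1) hi0m
  have hc1 : 1 ≤ c := by have := hr i0; omega
  have hM1 : 1 ≤ M := by omega
  have hNu : N ≤ capC n s r := by omega
  have hMv : M ≤ capC n s r := hsum_le (s := s) hr v
  have hME : M + 1 ≤ E := by omega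
  -- intermediate pair with head sums (E, N + M - E)
  obtain ⟨w1, hw1u, hw1s⟩ := exists_head (s := s) hr u E (by omega)
  obtain ⟨w2, hw2v, hw2s⟩ := exists_head (s := s) hr v (N + M - E) (by omega)
  have hTz : E ≤ N + M := by omega
  have step1 : Qp k s t u v = Qp k s t w1 w2 := by
    rcases le_or_gt E N with hcase | hcase
    · exact move hr hst i0 hi0 u v w1 w2 hw1u hw2v (N - E) 0
        (by omega) (by omega) (by omega) (by omega) (by omega) (by omega)
        (by omega) (by omega)
    · exact move hr hst i0 hi0 u v w1 w2 hw1u hw2v 0 (E - N)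
        (by omega) (by omega) (by omega) (by omega) (by omega) (by omega)
        (by omega) (by omega)
  have step2 : Qp k s t w1 w2 = Qp k s t u' v' := by
    have hw1u' : ∀ i : Fin n, s ≤ (i : ℕ) → u' i = w1 i := by
      intro i hi; rw [hu i hi, hw1u i hi]
    have hw2v' : ∀ i : Fin n, s ≤ (i : ℕ) → v' i = w2 i := by
      intro i hi; rw [hv i hi, hw2v i hi]
    rcases le_or_gt E (N + 1) with hcase | hcase
    · exact move hr hst i0 hi0 w1 w2 u' v' hw1u' hw2v' 0 (N + 1 - E)
        (by omega) (by omega) (by omega) (by omega) (by omega) (by omega)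
        (by omega) (by omega)
    · exact move hr hst i0 hi0 w1 w2 u' v' hw1u' hw2v' (E - N - 1) 0
        (by omega) (by omega) (by omega) (by omega) (by omega) (by omega)
        (by omega) (by omega)
  rw [step1, step2]

lemma onestep (hr : ∀ i, 2 ≤ r i) (hs2 : 2 ≤ s) (hst : s ≤ t) (htn : t ≤ n)
    (u v u' v' : Idx n r)
    (hu : ∀ i : Fin n, s ≤ (i : ℕ) → u' i = u i) (hv : ∀ i : Fin n, s ≤ (i : ℕ) → v' i = v i)
    (hN' : hsum s u' = hsum s u + 1) (hM' : hsum s v' + 1 = hsum s v)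
    (hNC : hsum s u + 1 ≤ capC n s r) :
    Qp k s t u v = Qp k s t u' v' := by
  have hn2 : 2 ≤ n := by omega
  set i0 : Fin n := ⟨0, by omega⟩ with hi0d
  set j0 : Fin n := ⟨1, by omega⟩ with hj0d
  have hi0 : (i0 : ℕ) < s := by simp [hi0d]; omega
  have hj0 : (j0 : ℕ) < s := by simp [hj0d]; omega
  have hne : j0 ≠ i0 := by simp [hi0d, hj0d, Fin.ext_iff]
  have hi0m : i0 ∈ headF n s := by simp [headF, hi0]
  have hj0m : j0 ∈ headF n s := by simp [headF, hj0]
  set N := hsum s u with hN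
  set M := hsum s v with hM
  set c0 := r i0 - 1 with hc0
  set c1 := r j0 - 1 with hc1
  set E0 := ∑ i ∈ (headF n s).erase i0, (r i - 1) with hE0
  set E1 := ∑ i ∈ (headF n s).erase j0, (r i - 1) with hE1
  have hcE0 : c0 + E0 = capC n s r := by
    rw [hc0, hE0]; unfold capC; exact Finset.add_sum_erase _ (fun i => r i - 1) hi0m
  have hcE1 : c1 + E1 = capC n s r := by
    rw [hc1, hE1]; unfold capC; exact Finset.add_sum_erase _ (fun i => r i - 1) hj0m
  have hc10 : c1 ≤ E0 := by
    rw [hE0, hc1]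
    exact Finset.single_le_sum (f := fun i => r i - 1) (fun i _ => Nat.zero_le _)
      (Finset.mem_erase.mpr ⟨hne, hj0m⟩)
  have hc01 : c0 ≤ E1 := by
    rw [hE1, hc0]
    exact Finset.single_le_sum (f := fun i => r i - 1) (fun i _ => Nat.zero_le _)
      (Finset.mem_erase.mpr ⟨(Ne.symm hne), hi0m⟩)
  have hc0p : 1 ≤ c0 := by have := hr i0; omega
  have hc1p : 1 ≤ c1 := by have := hr j0; omega
  have hM1 : 1 ≤ M := by omega
  have hMC : M ≤ capC n s r := hsum_le (s := s) hr v
  by_cases hD0 : N + 1 ≤ M + E0 ∧ M ≤ N + E0 + 1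
  · exact move hr hst i0 hi0 u v u' v' hu hv (max (N - E0) (M - 1 - E0))
      (max (N - E0) (M - 1 - E0) + 1) (by omega) (by omega) (by omega) (by omega)
      (by omega) (by omega) (by omega) (by omega)
  by_cases hD1 : N + 1 ≤ M + E1 ∧ M ≤ N + E1 + 1
  · exact move hr hst j0 hj0 u v u' v' hu hv (max (N - E1) (M - 1 - E1))
      (max (N - E1) (M - 1 - E1) + 1) (by omega) (by omega) (by omega) (by omega)
      (by omega) (by omega) (by omega) (by omega)
  have h0 : M + E0 ≤ N ∨ N + E0 + 2 ≤ M := by omega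
  have h1 : M + E1 ≤ N ∨ N + E1 + 2 ≤ M := by omega
  rcases h0 with hA0 | hB0 <;> rcases h1 with hA1 | hB1
  · -- both type A : plan at i0
    exact typeA_plan hr hst i0 hi0 u v u' v' hu hv hN' hM' hNC (by omega) (by omega)
  · omega
  · omega
  · -- both type B : plan at i0 on the reversed pair
    have plan := typeA_plan (k := k) hr hst i0 hi0 v' u' v u
      (fun i hi => (hv i hi).symm) (fun i hi => (hu i hi).symm)
      (by omega) (by omega) (by omega) (by omega) (by omega)
    calc Qp k s t u v = Qp k s t v u := Qp_comm u v
      _ = Qp k s t v' u' := plan.symm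
      _ = Qp k s t u' v' := Qp_comm v' u'

lemma pairsum_le (hr : ∀ i, 2 ≤ r i) (hs2 : 2 ≤ s) (hst : s ≤ t) (htn : t ≤ n) :
    ∀ (δ : ℕ) (u v u' v' : Idx n r),
    (∀ i : Fin n, s ≤ (i : ℕ) → u' i = u i) → (∀ i : Fin n, s ≤ (i : ℕ) → v' i = v i) →
    hsum s u + hsum s v = hsum s u' + hsum s v' → hsum s u + δ = hsum s u' →
    Qp k s t u v = Qp k s t u' v' := by
  intro δ
  induction δ with
  | zero =>
    intro u v u' v' hu hv hsums hδ
    exact Qp_congr (sEquiv_of _ _ (by omega) (fun i hi => (hu i hi).symm)).symm.symm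
      (sEquiv_of _ _ (by omega) (fun i hi => (hv i hi).symm)).symm.symm |>.symm.symm
  | succ δ ih =>
    intro u v u' v' hu hv hsums hδ
    have h1 : hsum s u + 1 ≤ capC n s r := by
      have := hsum_le (s := s) hr u'
      omega
    obtain ⟨up, hupu, hups⟩ := exists_head (s := s) hr u (hsum s u + 1) h1
    have hvpos : 1 ≤ hsum s v := by omega
    obtain ⟨vm, hvmv, hvms⟩ := exists_head (s := s) hr v (hsum s v - 1) (by have := hsum_le (s := s) hr v; omega)
    have step : Qp k s t u v = Qp k s t up vm :=
      onestep hr hs2 hst htn u v up vm hupu hvmv hups (by omega) h1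
    rw [step]
    exact ih up vm u' v' (fun i hi => by rw [hu i hi, hupu i hi])
      (fun i hi => by rw [hv i hi, hvmv i hi]) (by omega) (by omega)

lemma pairsum (hr : ∀ i, 2 ≤ r i) (hs2 : 2 ≤ s) (hst : s ≤ t) (htn : t ≤ n)
    (u v u' v' : Idx n r)
    (hu : ∀ i : Fin n, s ≤ (i : ℕ) → u' i = u i) (hv : ∀ i : Fin n, s ≤ (i : ℕ) → v' i = v i)
    (hsums : hsum s u + hsum s v = hsum s u' + hsum s v') :
    Qp k s t u v = Qp k s t u' v' := by
  rcases le_total (hsum s u) (hsum s u') with h | h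
  · exact pairsum_le hr hs2 hst htn (hsum s u' - hsum s u) u v u' v' hu hv hsums (by omega)
  · exact (pairsum_le hr hs2 hst htn (hsum s u - hsum s u') u' v' u v
      (fun i hi => (hu i hi).symm) (fun i hi => (hv i hi).symm) (by omega) (by omega)).symm

end HilbertOneStep
section HilbertMatch

open MvPolynomial

variable {k : Type} [CommRing k] {n s t : ℕ} {r : Fin n → ℕ}

/-- the sizes of tail components -/
def tlf (n t : ℕ) (r : Fin n → ℕ) : Fin n → ℕ := fun i => if t ≤ (i : ℕ) then r i else 1

/-- the type of tails -/
abbrev TailT (n t : ℕ) (r : Fin n → ℕ) := ∀ i : Fin n, Fin (tlf n t r i)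

/-- the tail of an index -/
def tailf2 (t : ℕ) (a : Idx n r) : TailT n t r := fun i =>
  if h : t ≤ (i : ℕ) then Fin.cast (by simp [tlf, h]) (a i) else ⟨0, by simp [tlf, h]⟩

lemma tailf2_congr {a b : Idx n r} (h : ∀ i : Fin n, t ≤ (i : ℕ) → a i = b i) :
    tailf2 t a = tailf2 t b := by
  funext i
  unfold tailf2
  by_cases hi : t ≤ (i : ℕ)
  · rw [dif_pos hi, dif_pos hi, h i hi]
  · rw [dif_neg hi, dif_neg hi]

lemma tailf2_inj {a b : Idx n r} (h : tailf2 t a = tailf2 t b) :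
    ∀ i : Fin n, t ≤ (i : ℕ) → a i = b i := by
  intro i hi
  have := congrFun h i
  unfold tailf2 at this
  rw [dif_pos hi, dif_pos hi] at this
  have h2 := congrArg Fin.val this
  simp only [Fin.coe_cast] at h2
  exact Fin.ext h2

/-- equality above `s` -/
def UpEq (s : ℕ) (x y : Idx n r) : Prop := ∀ i : Fin n, s ≤ (i : ℕ) → x i = y i

lemma rel_upeq_self (m : Multiset (Idx n r)) : Multiset.Rel (UpEq s) m m := by
  induction m using Multiset.induction_on with
  | empty => exact Multiset.Rel.zero
  | cons a m ih => exact Multiset.Rel.cons (fun i _ => rfl) ih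

lemma rel_upeq_trans {m1 m2 m3 : Multiset (Idx n r)} (h1 : Multiset.Rel (UpEq s) m1 m2)
    (h2 : Multiset.Rel (UpEq s) m2 m3) : Multiset.Rel (UpEq s) m1 m3 := by
  induction h1 generalizing m3 with
  | zero => exact h2
  | @cons a b as bs hab hrel ih =>
    obtain ⟨c, cs, hbc, hrel2, rfl⟩ := Multiset.rel_cons_left.mp h2
    exact Multiset.Rel.cons (fun i hi => (hab i hi).trans (hbc i hi)) (ih hrel2)

lemma rel_map_eq {β : Type*} {m m' : Multiset (Idx n r)} {f : Idx n r → β}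
    (hf : ∀ x y : Idx n r, UpEq s x y → f x = f y)
    (h : Multiset.Rel (UpEq s) m m') : m.map f = m'.map f := by
  rw [← Multiset.rel_eq, Multiset.rel_map]
  exact Multiset.Rel.mono h (fun x _ y _ hxy => hf x y hxy)

lemma sw_hsum (i : Fin n) (hi : s ≤ (i : ℕ)) (x y : Idx n r) :
    hsum s (sw i x y) = hsum s x := by
  unfold hsum
  apply Finset.sum_congr rfl
  intro j hj
  simp only [headF, Finset.mem_filter] at hj
  rw [sw, if_neg (by rintro rfl; omega)]

lemma sw_apply_ne (i j : Fin n) (hij : j ≠ i) (x y : Idx n r) : sw i x y j = x j := by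
  rw [sw, if_neg hij]

lemma sw_apply_self (i : Fin n) (x y : Idx n r) : sw i x y i = y i := by
  rw [sw, if_pos rfl]

lemma Pm_swap (i : Fin n) (hi : (i : ℕ) < t) (a b : Idx n r) (w : Multiset (Idx n r)) :
    Pm k s t (a ::ₘ b ::ₘ w) = Pm k s t (sw i a b ::ₘ sw i b a ::ₘ w) :=
  Pm_pair a b w (Qp_swap i hi a b)

lemma matchcoords (hst : s ≤ t) :
    ∀ (F : Finset (Fin n)), (∀ i ∈ F, s ≤ (i : ℕ) ∧ (i : ℕ) < t) →
    ∀ (a b : Idx n r) (m1 : Multiset (Idx n r)),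
    (∀ i ∈ F, a i ∈ (b ::ₘ m1).map (fun x => x i)) →
    ∃ b' m1', Pm k s t (b ::ₘ m1) = Pm k s t (b' ::ₘ m1') ∧
      (∀ i ∈ F, b' i = a i) ∧ (∀ i ∉ F, b' i = b i) ∧
      (∀ j : Fin n, ((b' ::ₘ m1').map (fun x => x j)) = ((b ::ₘ m1).map (fun x => x j))) ∧
      ((b' ::ₘ m1').map (tailf2 t) = (b ::ₘ m1).map (tailf2 t)) ∧
      ((b' ::ₘ m1').map (hsum s) = (b ::ₘ m1).map (hsum s)) ∧
      Multiset.card m1' = Multiset.card m1 := by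
  intro F
  induction F using Finset.induction_on with
  | empty =>
    intro _ a b m1 _
    exact ⟨b, m1, rfl, fun i hi => absurd hi (Finset.notMem_empty i),
      fun _ _ => rfl, fun _ => rfl, rfl, rfl, rfl⟩
  | insert i F hiF ih =>
    intro hF a b m1 hmem
    have his : s ≤ (i : ℕ) ∧ (i : ℕ) < t := hF i (Finset.mem_insert_self i F)
    have hFs : ∀ j ∈ F, s ≤ (j : ℕ) ∧ (j : ℕ) < t :=
      fun j hj => hF j (Finset.mem_insert_of_mem hj)
    by_cases hb : b i = a i
    · obtain ⟨b', m1', hP, h1, h2, h3, h4, h5, h6⟩ := ih hFs a b m1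
        (fun j hj => hmem j (Finset.mem_insert_of_mem hj))
      refine ⟨b', m1', hP, ?_, ?_, h3, h4, h5, h6⟩
      · intro j hj
        rcases Finset.mem_insert.mp hj with rfl | hjF
        · rw [h2 j hiF, hb]
        · exact h1 j hjF
      · intro j hj
        exact h2 j (fun hjF => hj (Finset.mem_insert_of_mem hjF))
    · have hai : a i ∈ m1.map (fun x => x i) := by
        have := hmem i (Finset.mem_insert_self i F)
        rw [Multiset.map_cons, Multiset.mem_cons] at this
        rcases this with h | h
        · exact absurd h.symm hb
        · exact h
      obtain ⟨e, hem, hei⟩ := Multiset.mem_map.mp hai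
      obtain ⟨m2, rfl⟩ := Multiset.exists_cons_of_mem hem
      set b2 := sw i b e with hb2
      set e2 := sw i e b with he2
      have hstep : Pm k s t (b ::ₘ e ::ₘ m2) = Pm k s t (b2 ::ₘ e2 ::ₘ m2) :=
        Pm_swap i his.2 b e m2
      have hmaps0 : ∀ j : Fin n, ((b2 ::ₘ e2 ::ₘ m2).map (fun x => x j))
          = ((b ::ₘ e ::ₘ m2).map (fun x => x j)) := by
        intro j
        rcases eq_or_ne j i with rfl | hji
        · simp only [Multiset.map_cons]
          rw [hb2, he2, sw_apply_self, sw_apply_self]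
          exact Multiset.cons_swap _ _ _
        · simp only [Multiset.map_cons]
          rw [hb2, he2, sw_apply_ne i j hji, sw_apply_ne i j hji]
      obtain ⟨b', m1', hP, h1, h2, h3, h4, h5, h6⟩ := ih hFs a b2 (e2 ::ₘ m2)
        (fun j hj => by
          rw [hmaps0 j]
          exact hmem j (Finset.mem_insert_of_mem hj))
      refine ⟨b', m1', hstep.trans hP, ?_, ?_, ?_, ?_, ?_, ?_⟩
      · intro j hj
        rcases Finset.mem_insert.mp hj with rfl | hjF
        · rw [h2 j hiF, hb2, sw_apply_self, hei]
        · exact h1 j hjF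
      · intro j hj
        have hji : j ≠ i := fun h => hj (h ▸ Finset.mem_insert_self i F)
        rw [h2 j (fun hjF => hj (Finset.mem_insert_of_mem hjF)), hb2, sw_apply_ne i j hji]
      · intro j
        rw [h3 j, hmaps0 j]
      · rw [h4]
        simp only [Multiset.map_cons]
        rw [hb2, he2,
          tailf2_congr (fun j hj => sw_apply_ne i j (by rintro rfl; omega) b e),
          tailf2_congr (fun j hj => sw_apply_ne i j (by rintro rfl; omega) e b)]
      · rw [h5]
        simp only [Multiset.map_cons]
        rw [hb2, he2, sw_hsum i his.1, sw_hsum i his.1]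
      · rw [h6]
        simp [Multiset.card_cons]
end HilbertMatch
section HilbertFinal

open MvPolynomial

variable {k : Type} [CommRing k] {n s t : ℕ} {r : Fin n → ℕ}

lemma eqhead (hr : ∀ i, 2 ≤ r i) (hs2 : 2 ≤ s) (hst : s ≤ t) (htn : t ≤ n) :
    ∀ (δ : ℕ) (a b : Idx n r) (m1 : Multiset (Idx n r)) (S0 : ℕ),
    (∀ i : Fin n, s ≤ (i : ℕ) → b i = a i) →
    ((hsum s a - hsum s b) + (hsum s b - hsum s a) = δ) →
    (hsum s b + ((m1.map (hsum s)).sum) = hsum s a + S0) →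
    (S0 ≤ Multiset.card m1 * capC n s r) →
    ∃ m1', Pm k s t (b ::ₘ m1) = Pm k s t (a ::ₘ m1') ∧
      Multiset.Rel (UpEq s) m1 m1' ∧ ((m1'.map (hsum s)).sum) = S0 := by
  intro δ
  induction δ using Nat.strong_induction_on with
  | _ δ ih =>
    intro a b m1 S0 hba hδ htot hS0
    rcases Nat.lt_trichotomy (hsum s b) (hsum s a) with hlt | heq | hgt
    · -- need to pull mass into b
      have hsum1 : 1 ≤ (m1.map (hsum s)).sum := by omega
      have hex : ∃ e ∈ m1, hsum s e ≠ 0 := by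
        by_contra hc
        push_neg at hc
        have : (m1.map (hsum s)).sum = 0 :=
          Multiset.sum_eq_zero (fun x hx => by
            obtain ⟨e, he, rfl⟩ := Multiset.mem_map.mp hx
            exact hc e he)
        omega
      obtain ⟨e, hem, hes⟩ := hex
      obtain ⟨m2, rfl⟩ := Multiset.exists_cons_of_mem hem
      have hsume : hsum s e ≤ capC n s r := hsum_le (s := s) hr e
      have hsuma : hsum s a ≤ capC n s r := hsum_le (s := s) hr a
      obtain ⟨bp, hbpu, hbps⟩ := exists_head (s := s) hr b (hsum s b + 1) (by omega)
      obtain ⟨em, hemu, hems⟩ := exists_head (s := s) hr e (hsum s e - 1) (by omega)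
      have hstep : Pm k s t (b ::ₘ e ::ₘ m2) = Pm k s t (bp ::ₘ em ::ₘ m2) :=
        Pm_pair b e m2 (pairsum hr hs2 hst htn b e bp em hbpu hemu (by omega))
      have hsm : ((e ::ₘ m2).map (hsum s)).sum = hsum s e + ((m2.map (hsum s)).sum) := by
        rw [Multiset.map_cons, Multiset.sum_cons]
      have hsm2 : ((em ::ₘ m2).map (hsum s)).sum = (hsum s e - 1) + ((m2.map (hsum s)).sum) := by
        rw [Multiset.map_cons, Multiset.sum_cons, hems]
      obtain ⟨m1', hP, hrel, hfin⟩ := ih (δ - 1) (by omega) a bp (em ::ₘ m2) S0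
        (fun i hi => by rw [hbpu i hi, hba i hi]) (by omega) (by omega)
        (by simpa using hS0)
      refine ⟨m1', hstep.trans hP, ?_, hfin⟩
      exact rel_upeq_trans (Multiset.Rel.cons (fun i hi => (hemu i hi).symm) (rel_upeq_self m2)) hrel
    · refine ⟨m1, Pm_congr_head (sEquiv_of b a heq hba) m1, rel_upeq_self m1, by omega⟩
    · -- need to push mass out of b
      have hex : ∃ e ∈ m1, hsum s e + 1 ≤ capC n s r := by
        by_contra hc
        push_neg at hc
        have hall : ∀ x ∈ m1.map (hsum s), capC n s r ≤ x := by
          intro x hx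
          obtain ⟨e, he, rfl⟩ := Multiset.mem_map.mp hx
          have := hc e he
          omega
        have := Multiset.card_nsmul_le_sum hall
        rw [Multiset.card_map, smul_eq_mul] at this
        omega
      obtain ⟨e, hem, hes⟩ := hex
      obtain ⟨m2, rfl⟩ := Multiset.exists_cons_of_mem hem
      obtain ⟨bm, hbmu, hbms⟩ := exists_head (s := s) hr b (hsum s b - 1)
        (by have := hsum_le (s := s) hr b; omega)
      obtain ⟨ep, hepu, heps⟩ := exists_head (s := s) hr e (hsum s e + 1) hes
      have hstep : Pm k s t (b ::ₘ e ::ₘ m2) = Pm k s t (bm ::ₘ ep ::ₘ m2) :=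
        Pm_pair b e m2 (pairsum hr hs2 hst htn b e bm ep hbmu hepu (by omega))
      have hsm : ((e ::ₘ m2).map (hsum s)).sum = hsum s e + ((m2.map (hsum s)).sum) := by
        rw [Multiset.map_cons, Multiset.sum_cons]
      have hsm2 : ((ep ::ₘ m2).map (hsum s)).sum = (hsum s e + 1) + ((m2.map (hsum s)).sum) := by
        rw [Multiset.map_cons, Multiset.sum_cons, heps]
      obtain ⟨m1', hP, hrel, hfin⟩ := ih (δ - 1) (by omega) a bm (ep ::ₘ m2) S0
        (fun i hi => by rw [hbmu i hi, hba i hi]) (by omega) (by omega)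
        (by simpa using hS0)
      refine ⟨m1', hstep.trans hP, ?_, hfin⟩
      exact rel_upeq_trans (Multiset.Rel.cons (fun i hi => (hepu i hi).symm) (rel_upeq_self m2)) hrel

lemma final (hr : ∀ i, 2 ≤ r i) (hs2 : 2 ≤ s) (hst : s ≤ t) (htn : t ≤ n)
    (m : Multiset (Idx n r)) :
    ∀ (m' : Multiset (Idx n r)),
    Multiset.card m = Multiset.card m' →
    (m.map (hsum s)).sum = (m'.map (hsum s)).sum →
    (∀ j : Fin n, s ≤ (j : ℕ) → (j : ℕ) < t →
      m.map (fun x => x j) = m'.map (fun x => x j)) →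
    m.map (tailf2 t) = m'.map (tailf2 t) →
    Pm k s t m = Pm k s t m' := by
  induction m using Multiset.induction_on with
  | empty =>
    intro m' hcard _ _ _
    rw [Multiset.card_zero] at hcard
    rw [(Multiset.card_eq_zero.mp hcard.symm)]
  | cons a m0 ihm =>
    intro m' hcard htotal hmid htails
    have hta : tailf2 t a ∈ m'.map (tailf2 t) := by
      rw [← htails, Multiset.map_cons]
      exact Multiset.mem_cons_self _ _
    obtain ⟨b, hbm, htb⟩ := Multiset.mem_map.mp hta
    obtain ⟨m1, rfl⟩ := Multiset.exists_cons_of_mem hbm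
    have hFmid : ∀ i ∈ midFin n s t, s ≤ (i : ℕ) ∧ (i : ℕ) < t := by
      intro i hi
      simpa [midFin] using (Finset.mem_filter.mp hi).2
    obtain ⟨b', m1', hP, hbF, hbnF, hmaps, htail2, hhsums, hcards⟩ :=
      matchcoords (k := k) hst (midFin n s t) hFmid a b m1
        (fun i hi => by
          rw [← hmid i (hFmid i hi).1 (hFmid i hi).2, Multiset.map_cons]
          exact Multiset.mem_cons_self _ _)
    have hb'a : ∀ i : Fin n, s ≤ (i : ℕ) → b' i = a i := by
      intro i hi
      by_cases hit : (i : ℕ) < t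
      · exact hbF i (by simp [midFin, hi, hit])
      · rw [hbnF i (by simp [midFin, hit]), tailf2_inj htb i (by omega)]
    have htotsum : hsum s b' + ((m1'.map (hsum s)).sum) = hsum s a + ((m0.map (hsum s)).sum) := by
      have h1 : ((b' ::ₘ m1').map (hsum s)).sum = ((b ::ₘ m1).map (hsum s)).sum :=
        congrArg Multiset.sum hhsums
      rw [Multiset.map_cons, Multiset.sum_cons, Multiset.map_cons, Multiset.sum_cons] at h1
      rw [Multiset.map_cons, Multiset.sum_cons, Multiset.map_cons, Multiset.sum_cons] at htotal
      omega
    have hS0 : ((m0.map (hsum s)).sum) ≤ Multiset.card m1' * capC n s r := by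
      have h1 : ((m0.map (hsum s)).sum) ≤ Multiset.card (m0.map (hsum s)) • capC n s r :=
        Multiset.sum_le_card_nsmul (m0.map (hsum s)) (capC n s r) (fun x hx => by
          obtain ⟨e, _, rfl⟩ := Multiset.mem_map.mp hx
          exact hsum_le (s := s) hr e)
      rw [Multiset.card_map] at h1
      have hc01 : Multiset.card m1' = Multiset.card m0 := by
        rw [hcards]
        simp only [Multiset.card_cons] at hcard
        omega
      rw [smul_eq_mul] at h1
      rw [hc01]
      exact h1
    obtain ⟨m1'', hP2, hrel, hfin⟩ := eqhead (k := k) hr hs2 hst htn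
      ((hsum s a - hsum s b') + (hsum s b' - hsum s a)) a b' m1'
      ((m0.map (hsum s)).sum) hb'a rfl htotsum hS0
    have hrelmapmid : ∀ j : Fin n, s ≤ (j : ℕ) →
        m1'.map (fun x => x j) = m1''.map (fun x => x j) :=
      fun j hj => rel_map_eq (fun x y hxy => hxy j hj) hrel
    have ihapp : Pm k s t m0 = Pm k s t m1'' := by
      apply ihm m1''
      · rw [← Multiset.card_eq_card_of_rel hrel, hcards]
        simp only [Multiset.card_cons] at hcard
        omega
      · rw [hfin]
      · intro j hjs hjt
        rw [← hrelmapmid j hjs]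
        have h1 : (b' ::ₘ m1').map (fun x => x j) = (a ::ₘ m0).map (fun x => x j) := by
          rw [hmaps j, ← hmid j hjs hjt]
        rw [Multiset.map_cons, Multiset.map_cons, hb'a j hjs] at h1
        exact ((Multiset.cons_inj_right _).mp h1).symm
      · have h1 : (b' ::ₘ m1').map (tailf2 t) = (a ::ₘ m0).map (tailf2 t) := by
          rw [htail2, ← htails]
        rw [Multiset.map_cons, Multiset.map_cons,
          tailf2_congr (fun i hi => hb'a i (by omega))] at h1
        have h2 : m1''.map (tailf2 t) = m1'.map (tailf2 t) :=
          (rel_map_eq (fun x y hxy => tailf2_congr (fun i hi => hxy i (by omega))) hrel).symm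
        rw [h2, ((Multiset.cons_inj_right _).mp h1).symm]
    calc Pm k s t (a ::ₘ m0) = Ideal.Quotient.mk _ (xvar k s a) * Pm k s t m0 := Pm_cons a m0
      _ = Ideal.Quotient.mk _ (xvar k s a) * Pm k s t m1'' := by rw [ihapp]
      _ = Pm k s t (a ::ₘ m1'') := (Pm_cons a m1'').symm
      _ = Pm k s t (b' ::ₘ m1') := hP2.symm
      _ = Pm k s t (b ::ₘ m1) := hP.symm

end HilbertFinal
section HilbertPsi

open MvPolynomial

variable {k : Type} [CommRing k] {n s t : ℕ} {r : Fin n → ℕ}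

/-- variables of the auxiliary polynomial ring -/
abbrev Vt (n t : ℕ) (r : Fin n → ℕ) : Type := Unit ⊕ ((Fin n × ℕ) ⊕ TailT n t r)

/-- the invariant (exponent vector) of a variable -/
noncomputable def phiv (s t : ℕ) (a : Idx n r) : Vt n t r →₀ ℕ :=
  Finsupp.single (Sum.inl ()) (hsum s a)
    + (∑ i ∈ midFin n s t, Finsupp.single (Sum.inr (Sum.inl (i, (a i : ℕ)))) 1)
    + Finsupp.single (Sum.inr (Sum.inr (tailf2 t a))) 1

lemma phiv_congr (hst : s ≤ t) {a b : Idx n r} (hab : sEquiv n s r a b) :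
    phiv s t a = phiv s t b := by
  unfold phiv
  have h1 : hsum s a = hsum s b := hab.1
  have h2 : ∀ i ∈ midFin n s t, ((a i : ℕ)) = ((b i : ℕ)) := by
    intro i hi
    simp only [midFin, Finset.mem_filter] at hi
    rw [hab.2 i hi.2.1]
  have h3 : tailf2 t a = tailf2 t b := by
    apply tailf2_congr
    intro i hi
    exact hab.2 i (by omega)
  rw [h1, h3]
  congr 1
  congr 1
  apply Finset.sum_congr rfl
  intro i hi
  rw [h2 i hi]

lemma phiv_swap (hst : s ≤ t) (i : Fin n) (hi : (i : ℕ) < t) (a b : Idx n r) :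
    phiv s t a + phiv s t b = phiv s t (sw i a b) + phiv s t (sw i b a) := by
  have hY : hsum s (sw i a b) + hsum s (sw i b a) = hsum s a + hsum s b := by
    unfold hsum
    rw [← Finset.sum_add_distrib, ← Finset.sum_add_distrib]
    apply Finset.sum_congr rfl
    intro j hj
    rcases eq_or_ne j i with rfl | hne
    · rw [sw_apply_self, sw_apply_self]; ring
    · rw [sw_apply_ne i j hne, sw_apply_ne i j hne]
  have grp : ∀ x1 x2 x3 y1 y2 y3 : Vt n t r →₀ ℕ,
      (x1 + x2 + x3) + (y1 + y2 + y3) = (x1 + y1) + (x2 + y2) + (x3 + y3) := by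
    intros; abel
  unfold phiv
  rw [grp, grp]
  have e1 : Finsupp.single (Sum.inl () : Vt n t r) (hsum s a)
      + Finsupp.single (Sum.inl ()) (hsum s b)
      = Finsupp.single (Sum.inl ()) (hsum s (sw i a b))
      + Finsupp.single (Sum.inl ()) (hsum s (sw i b a)) := by
    rw [← Finsupp.single_add, ← Finsupp.single_add, hY]
  have e2 : (∑ j ∈ midFin n s t,
        Finsupp.single (Sum.inr (Sum.inl (j, (a j : ℕ))) : Vt n t r) 1)
      + (∑ j ∈ midFin n s t, Finsupp.single (Sum.inr (Sum.inl (j, (b j : ℕ)))) 1)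
      = (∑ j ∈ midFin n s t, Finsupp.single (Sum.inr (Sum.inl (j, (sw i a b j : ℕ)))) 1)
      + (∑ j ∈ midFin n s t, Finsupp.single (Sum.inr (Sum.inl (j, (sw i b a j : ℕ)))) 1) := by
    rw [← Finset.sum_add_distrib, ← Finset.sum_add_distrib]
    apply Finset.sum_congr rfl
    intro j hj
    rcases eq_or_ne j i with rfl | hne
    · rw [sw_apply_self, sw_apply_self]
      exact add_comm _ _
    · rw [sw_apply_ne i j hne, sw_apply_ne i j hne]
  have e3a : tailf2 t (sw i a b) = tailf2 t a :=
    tailf2_congr (fun j hj => sw_apply_ne i j (by rintro rfl; omega) a b)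
  have e3b : tailf2 t (sw i b a) = tailf2 t b :=
    tailf2_congr (fun j hj => sw_apply_ne i j (by rintro rfl; omega) b a)
  rw [e1, e2, e3a, e3b]

variable (k n s t r) in
/-- the invariant-reading algebra homomorphism -/
noncomputable def psif (hst : s ≤ t) : MvPolynomial (IQ n s r) k →ₐ[k] MvPolynomial (Vt n t r) k :=
  aeval (fun q => Quotient.lift (fun a : Idx n r => (monomial (phiv s t a) (1 : k)))
    (fun a b hab => congrArg (fun w => monomial w (1 : k)) (phiv_congr (t := t) hst hab)) q)

lemma psif_xvar (hst : s ≤ t) (a : Idx n r) : psif k n s t r hst (xvar k s a) = monomial (phiv s t a) 1 := by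
  unfold psif xvar
  rw [aeval_X]
  rfl

lemma psif_gminor (hst : s ≤ t) (i : Fin n) (hi : (i : ℕ) < t) (a b : Idx n r) :
    psif k n s t r hst (gminor k s i a b) = 0 := by
  unfold gminor
  rw [map_sub, map_mul, map_mul, psif_xvar hst, psif_xvar hst, psif_xvar hst, psif_xvar hst,
    monomial_mul, monomial_mul, one_mul, phiv_swap hst i hi a b]
  exact sub_self _

lemma psif_vanish (hst : s ≤ t) : ∀ x ∈ ITilde k s t r, psif k n s t r hst x = 0 := by
  intro x hx
  have : ITilde k s t r ≤ RingHom.ker (psif k n s t r hst).toRingHom := by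
    rw [ITilde, Ideal.span_le]
    rintro y ⟨i, a, b, hit, rfl⟩
    exact RingHom.mem_ker.mpr (psif_gminor hst i hit a b)
  exact RingHom.mem_ker.mp (this hx)

variable (k n s t r) in
/-- the induced map on the quotient -/
noncomputable def psibar (hst : s ≤ t) :
    (MvPolynomial (IQ n s r) k ⧸ ITilde k s t r) →ₐ[k] MvPolynomial (Vt n t r) k :=
  Ideal.Quotient.liftₐ (ITilde k s t r) (psif k n s t r hst) (psif_vanish hst)

variable (s t) in
/-- the invariant of a multiset of indices -/
noncomputable def Phim (m : Multiset (Idx n r)) : Vt n t r →₀ ℕ := (m.map (phiv s t)).sum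

lemma psibar_Pm (hst : s ≤ t) (m : Multiset (Idx n r)) :
    psibar k n s t r hst (Pm k s t m) = monomial (Phim s t m) 1 := by
  induction m using Multiset.induction_on with
  | empty =>
    rw [Pm_zero, map_one, Phim]
    simp
  | cons a m ih =>
    rw [Pm_cons, map_mul, ih]
    have h1 : psibar k n s t r hst (Ideal.Quotient.mk _ (xvar k s a))
        = monomial (phiv s t a) 1 := by
      unfold psibar
      rw [Ideal.Quotient.liftₐ_apply]
      exact psif_xvar hst a
    rw [h1, monomial_mul, one_mul, Phim, Phim, Multiset.map_cons, Multiset.sum_cons]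

lemma Phim_apply (m : Multiset (Idx n r)) (v : Vt n t r) :
    Phim s t m v = (m.map (fun a => phiv s t a v)).sum := by
  induction m using Multiset.induction_on with
  | empty => simp [Phim]
  | cons a m ih =>
    rw [Phim, Multiset.map_cons, Multiset.sum_cons, Finsupp.add_apply, Multiset.map_cons,
      Multiset.sum_cons, ← ih, Phim]

lemma phiv_apply_inl (a : Idx n r) : phiv s t a (Sum.inl ()) = hsum s a := by
  classical
  simp [phiv, Finsupp.single_apply, Finsupp.finset_sum_apply]

lemma phiv_apply_mid (a : Idx n r) (j : Fin n) (hj : j ∈ midFin n s t) (x : ℕ) :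
    phiv s t a (Sum.inr (Sum.inl (j, x))) = if (a j : ℕ) = x then 1 else 0 := by
  classical
  simp only [phiv, Finsupp.add_apply, Finsupp.finset_sum_apply, Finsupp.single_apply]
  rw [Finset.sum_eq_single_of_mem j hj (fun b _ hbj => by simp [hbj])]
  rcases eq_or_ne ((a j : ℕ)) x with he | hne2
  · simp [he]
  · simp [hne2]

lemma phiv_apply_tail (a : Idx n r) (τ : TailT n t r) :
    phiv s t a (Sum.inr (Sum.inr τ)) = if tailf2 t a = τ then 1 else 0 := by
  classical
  simp only [phiv, Finsupp.add_apply, Finsupp.finset_sum_apply, Finsupp.single_apply]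
  rcases eq_or_ne (tailf2 t a) τ with he | hne
  · simp [he]
  · simp [hne, Ne.symm hne]

lemma sum_ite_count {α : Type*} [DecidableEq α] (g : Idx n r → α) (m : Multiset (Idx n r))
    (x : α) : (m.map (fun a => if g a = x then (1 : ℕ) else 0)).sum = (m.map g).count x := by
  induction m using Multiset.induction_on with
  | empty => simp
  | cons a m ih =>
    rw [Multiset.map_cons, Multiset.sum_cons, ih, Multiset.map_cons, Multiset.count_cons]
    rcases eq_or_ne (g a) x with he | hne
    · rw [if_pos he, if_pos he.symm]; ring
    · rw [if_neg hne, if_neg (Ne.symm hne)]; ring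

/-- decoding the invariant -/
lemma decode {m m' : Multiset (Idx n r)} (h : Phim s t m = Phim s t m') :
    (m.map (hsum s)).sum = (m'.map (hsum s)).sum ∧
    (∀ j ∈ midFin n s t, m.map (fun a => (a j : ℕ)) = m'.map (fun a => (a j : ℕ))) ∧
    m.map (tailf2 t) = m'.map (tailf2 t) ∧
    Multiset.card m = Multiset.card m' := by
  classical
  have htail : m.map (tailf2 t) = m'.map (tailf2 t) := by
    apply Multiset.ext.mpr
    intro τ
    have := DFunLike.congr_fun h (Sum.inr (Sum.inr τ))
    simp only [Phim_apply] at this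
    rw [Multiset.map_congr rfl (fun a _ => phiv_apply_tail a τ),
        Multiset.map_congr rfl (fun a _ => phiv_apply_tail a τ),
        sum_ite_count, sum_ite_count] at this
    exact this
  refine ⟨?_, ?_, htail, ?_⟩
  · have := DFunLike.congr_fun h (Sum.inl ())
    simp only [Phim_apply] at this
    rw [Multiset.map_congr rfl (fun a _ => phiv_apply_inl a),
        Multiset.map_congr rfl (fun a _ => phiv_apply_inl a)] at this
    exact this
  · intro j hj
    apply Multiset.ext.mpr
    intro x
    have := DFunLike.congr_fun h (Sum.inr (Sum.inl (j, x)))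
    simp only [Phim_apply] at this
    rw [Multiset.map_congr rfl (fun a _ => phiv_apply_mid a j hj x),
        Multiset.map_congr rfl (fun a _ => phiv_apply_mid a j hj x),
        sum_ite_count, sum_ite_count] at this
    exact this
  · have h1 := congrArg (fun x => Multiset.card x) htail
    simpa using h1

end HilbertPsi
section HilbertCount

open MvPolynomial

variable {k : Type} [CommRing k] {n s t : ℕ} {r : Fin n → ℕ}

variable (n s t r) in
/-- target type enumerating the invariants of degree-`d` monomials -/
abbrev TgtT (d : ℕ) : Type :=
  Fin (d * capC n s r + 1) ×
    ((i : {i : Fin n // i ∈ midFin n s t}) → Sym (Fin (r i.1)) d) ×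
    Sym (TailT n t r) d

lemma nsplit (c : ℕ) : ∀ (d N : ℕ), N ≤ d * c →
    ∃ f : Fin d → ℕ, (∀ j, f j ≤ c) ∧ ∑ j, f j = N := by
  intro d
  induction d with
  | zero =>
    intro N h
    rw [Nat.zero_mul] at h
    refine ⟨fun _ => 0, fun j => Nat.zero_le _, by simp; omega⟩
  | succ d ih =>
    intro N h
    rw [Nat.succ_mul] at h
    obtain ⟨f, hf, hfs⟩ := ih (N - min c N) (by omega)
    refine ⟨Fin.cons (min c N) f, ?_, ?_⟩
    · intro j
      refine Fin.cases ?_ ?_ j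
      · simp
      · intro i; simp [hf i]
    · rw [Fin.sum_cons, hfs]
      omega

lemma exists_dec (hr : ∀ i, 2 ≤ r i) (hs2 : 2 ≤ s) (hst : s ≤ t) (htn : t ≤ n)
    (d : ℕ) (x : TgtT n s t r d) :
    ∃ m : Multiset (Idx n r), Multiset.card m = d ∧
      (m.map (hsum s)).sum = (x.1 : ℕ) ∧
      (∀ i : Fin n, (him : i ∈ midFin n s t) →
        m.map (fun a => a i) = (x.2.1 ⟨i, him⟩).1) ∧
      m.map (tailf2 t) = (x.2.2 : Multiset (TailT n t r)) := by
  classical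
  obtain ⟨N, g, τ⟩ := x
  have hN : (N : ℕ) ≤ d * capC n s r := by omega
  obtain ⟨f, hf, hfs⟩ := nsplit (capC n s r) d N hN
  -- lengths of the toLists
  have hgl : ∀ i : {i : Fin n // i ∈ midFin n s t}, ((g i).1.toList).length = d := by
    intro i
    rw [Multiset.length_toList, (g i).2]
  have hτl : (τ.1.toList).length = d := by
    rw [Multiset.length_toList, τ.2]
  -- the "upper parts" of the j-th element
  set G : Fin d → Idx n r := fun j i =>
    if him : i ∈ midFin n s t then ((g ⟨i, him⟩).1.toList).get (Fin.cast (hgl ⟨i, him⟩).symm j)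
    else if ht : t ≤ (i : ℕ) then
      Fin.cast (by simp [tlf, ht]) (((τ.1.toList).get (Fin.cast hτl.symm j)) i)
    else ⟨0, by have := hr i; omega⟩ with hG
  -- the elements
  have hex : ∀ j : Fin d, ∃ a : Idx n r,
      (∀ i : Fin n, s ≤ (i : ℕ) → a i = G j i) ∧ hsum s a = f j :=
    fun j => exists_head (s := s) hr (G j) (f j) (hf j)
  choose A hA1 hA2 using hex
  refine ⟨(List.ofFn A : List (Idx n r)), ?_, ?_, ?_, ?_⟩
  · simp
  · rw [Multiset.map_coe, List.map_ofFn]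
    rw [Multiset.sum_coe]
    rw [List.sum_ofFn]
    rw [← hfs]
    exact Finset.sum_congr rfl (fun j _ => hA2 j)
  · intro i him
    rw [Multiset.map_coe, List.map_ofFn]
    have hmem : ∀ j : Fin d, (A j) i = ((g ⟨i, him⟩).1.toList).get (Fin.cast (hgl ⟨i, him⟩).symm j) := by
      intro j
      have hsi : s ≤ (i : ℕ) := by
        simp only [midFin, Finset.mem_filter] at him
        exact him.2.1
      rw [hA1 j i hsi, hG]
      simp only [dif_pos him]
    have : (List.ofFn fun j => (A j) i) = (g ⟨i, him⟩).1.toList := by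
      apply List.ext_get
      · simp [hgl ⟨i, him⟩]
      · intro j h1 h2
        rw [List.get_ofFn]
        rw [hmem]
        congr 1
    rw [Function.comp_def, this, Multiset.coe_toList]
  · rw [Multiset.map_coe, List.map_ofFn]
    have hmem : ∀ j : Fin d, tailf2 t (A j) = (τ.1.toList).get (Fin.cast hτl.symm j) := by
      intro j
      funext i
      by_cases ht : t ≤ (i : ℕ)
      · have hsi : s ≤ (i : ℕ) := by omega
        have hnm : i ∉ midFin n s t := by simp [midFin]; omega
        apply Fin.ext
        have h1 : (tailf2 t (A j) i : ℕ) = ((A j) i : ℕ) := by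
          rw [tailf2, dif_pos ht]
          simp
        rw [h1, hA1 j i hsi, hG]
        simp only [dif_neg hnm, dif_pos ht]
        simp
      · have h1 : tlf n t r i = 1 := by rw [tlf, if_neg ht]
        apply Fin.ext
        have h2 := (tailf2 t (A j) i).isLt
        have h3 := (((τ.1.toList).get (Fin.cast hτl.symm j)) i).isLt
        omega
    have : (List.ofFn fun j => tailf2 t (A j)) = τ.1.toList := by
      apply List.ext_get
      · simp [hτl]
      · intro j h1 h2
        rw [List.get_ofFn, hmem]
        congr 1
    rw [Function.comp_def, this, Multiset.coe_toList]
    rfl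

end HilbertCount
section HilbertAssemble

open MvPolynomial

/-- the Hilbert function of `R/Ĩ(s,t)` for `2 ≤ s ≤ t`: the dimension of the
degree-`d` graded piece (the span of the images of the degree-`d` monomials) equals
`(d·Σ_{j≤s}(r j − 1) + 1) · C(d + r (t+1)⋯r n − 1, d) · Π_{s<i≤t} C(d + r i − 1, d)`. -/
theorem hilbert_function_ITilde (k : Type) [Field k] (n s t : ℕ) (r : Fin n → ℕ)
    (hr : ∀ i, 2 ≤ r i) (hs : 2 ≤ s) (hst : s ≤ t) (htn : t ≤ n) (d : ℕ) :
    Module.finrank k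
      (Submodule.span k
        ((fun u : IQ n s r →₀ ℕ =>
            Ideal.Quotient.mk (ITilde k s t r) (MvPolynomial.monomial u (1 : k))) ''
          {u | (u.sum fun _ e => e) = d})) =
      (d * (∑ i ∈ Finset.univ.filter (fun i : Fin n => (i : ℕ) < s), (r i - 1)) + 1) *
        Nat.choose (d + (∏ i ∈ Finset.univ.filter (fun i : Fin n => t ≤ (i : ℕ)), r i) - 1) d *
        ∏ i ∈ Finset.univ.filter (fun i : Fin n => s ≤ (i : ℕ) ∧ (i : ℕ) < t),
          Nat.choose (d + r i - 1) d := by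
  classical
  -- the decoder
  set dec : TgtT n s t r d → Multiset (Idx n r) :=
    fun x => (exists_dec hr hs hst htn d x).choose with hdecdef
  have hdec1 : ∀ x, Multiset.card (dec x) = d :=
    fun x => (exists_dec hr hs hst htn d x).choose_spec.1
  have hdec2 : ∀ x, ((dec x).map (hsum s)).sum = (x.1 : ℕ) :=
    fun x => (exists_dec hr hs hst htn d x).choose_spec.2.1
  have hdec3 : ∀ x, ∀ i : Fin n, ∀ him : i ∈ midFin n s t,
      (dec x).map (fun a => a i) = (x.2.1 ⟨i, him⟩).1 :=
    fun x => (exists_dec hr hs hst htn d x).choose_spec.2.2.1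
  have hdec4 : ∀ x, (dec x).map (tailf2 t) = (x.2.2 : Multiset (TailT n t r)) :=
    fun x => (exists_dec hr hs hst htn d x).choose_spec.2.2.2
  -- monomials vs Pm
  have hprodX : ∀ M : Multiset (IQ n s r),
      (monomial (Multiset.toFinsupp M) (1 : k)) = (M.map X).prod := by
    intro M
    induction M using Multiset.induction_on with
    | empty => simp
    | cons q M ih =>
      have h1 : (q ::ₘ M) = {q} + M := (Multiset.singleton_add q M).symm
      rw [h1, map_add, Multiset.toFinsupp_singleton, MvPolynomial.monomial_single_add, pow_one,
        Multiset.map_add, Multiset.prod_add, Multiset.map_singleton, Multiset.prod_singleton, ih]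
  have hsumcard : ∀ M : Multiset (IQ n s r),
      ((Multiset.toFinsupp M).sum fun _ e => e) = Multiset.card M := by
    intro M
    have h1 := Finsupp.card_toMultiset (Multiset.toFinsupp M)
    rw [Multiset.toFinsupp_toMultiset] at h1
    exact h1.symm
  have hPmmono : ∀ m : Multiset (Idx n r),
      Ideal.Quotient.mk (ITilde k s t r)
        (monomial (Multiset.toFinsupp (m.map (Quotient.mk (sSetoid n s r)))) (1 : k))
      = Pm k s t m := by
    intro m
    rw [hprodX, Pm]
    congr 1
    rw [Multiset.map_map]
    exact congrArg Multiset.prod (Multiset.map_congr rfl (fun a _ => rfl))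
  -- the span generators are the range of Pm ∘ dec
  set f : TgtT n s t r d →
      (MvPolynomial (IQ n s r) k ⧸ ITilde k s t r) := fun x => Pm k s t (dec x) with hfdef
  have hGeq : ((fun u : IQ n s r →₀ ℕ =>
            Ideal.Quotient.mk (ITilde k s t r) (MvPolynomial.monomial u (1 : k))) ''
          {u | (u.sum fun _ e => e) = d}) = Set.range f := by
    apply Set.eq_of_subset_of_subset
    · rintro y ⟨u, hu, rfl⟩
      set m : Multiset (Idx n r) := (Finsupp.toMultiset u).map Quotient.out with hm
      have hmmk : m.map (Quotient.mk (sSetoid n s r)) = Finsupp.toMultiset u := by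
        rw [hm, Multiset.map_map]
        exact (Multiset.map_congr rfl (fun q _ => Quotient.out_eq q)).trans
          (Multiset.map_id' _)
      have hcardm : Multiset.card m = d := by
        rw [hm, Multiset.card_map, Finsupp.card_toMultiset]
        exact hu
      have hy : Ideal.Quotient.mk (ITilde k s t r) (monomial u (1 : k)) = Pm k s t m := by
        have hu2 : u = Multiset.toFinsupp (m.map (Quotient.mk (sSetoid n s r))) := by
          rw [hmmk]
          exact (Finsupp.toMultiset_toFinsupp u).symm
        rw [hu2, hPmmono]
      have htotle : ((m.map (hsum s)).sum) ≤ d * capC n s r := by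
        have h1 : ((m.map (hsum s)).sum) ≤ Multiset.card (m.map (hsum s)) • capC n s r :=
          Multiset.sum_le_card_nsmul _ _ (fun x hx => by
            obtain ⟨e, _, rfl⟩ := Multiset.mem_map.mp hx
            exact hsum_le (s := s) hr e)
        rw [Multiset.card_map, hcardm, smul_eq_mul] at h1
        exact h1
      set x : TgtT n s t r d :=
        (⟨(m.map (hsum s)).sum, by omega⟩,
         fun i => ⟨m.map (fun a => a i.1), by rw [Multiset.card_map, hcardm]⟩,
         ⟨m.map (tailf2 t), by rw [Multiset.card_map, hcardm]⟩) with hx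
      refine ⟨x, ?_⟩
      have hfx : f x = Pm k s t m := by
        rw [hfdef]
        apply final hr hs hst htn (dec x) m
        · rw [hdec1 x, hcardm]
        · rw [hdec2 x]
        · intro j hjs hjt
          have hjm : j ∈ midFin n s t := by simp [midFin, hjs, hjt]
          rw [hdec3 x j hjm]
        · rw [hdec4 x]; rfl
      exact hfx.trans hy.symm
    · rintro y ⟨x, rfl⟩
      refine ⟨Multiset.toFinsupp ((dec x).map (Quotient.mk (sSetoid n s r))), ?_, ?_⟩
      · show ((Multiset.toFinsupp ((dec x).map (Quotient.mk (sSetoid n s r)))).sum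
          fun _ e => e) = d
        rw [hsumcard, Multiset.card_map, hdec1 x]
      · show Ideal.Quotient.mk (ITilde k s t r) (monomial _ (1 : k)) = f x
        rw [hPmmono, hfdef]
  -- injectivity of the invariant on the range of dec
  have hinj : Function.Injective (fun x : TgtT n s t r d => Phim s t (dec x)) := by
    intro x y hxy
    obtain ⟨h1, h2, h3, h4⟩ := decode hxy
    have e1 : x.1 = y.1 := by
      apply Fin.ext
      rw [← hdec2 x, ← hdec2 y, h1]
    have e2 : x.2.1 = y.2.1 := by
      funext i
      apply Subtype.ext
      rw [← hdec3 x i.1 i.2, ← hdec3 y i.1 i.2]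
      apply Multiset.map_injective (f := Fin.val) Fin.val_injective
      rw [Multiset.map_map, Multiset.map_map]
      exact h2 i.1 i.2
    have e3 : x.2.2 = y.2.2 := by
      apply Subtype.ext
      show (x.2.2 : Multiset (TailT n t r)) = (y.2.2 : Multiset (TailT n t r))
      rw [← hdec4 x, ← hdec4 y, h3]
    exact Prod.ext e1 (Prod.ext e2 e3)
  -- linear independence
  have hlinmon : LinearIndependent k
      (fun x : TgtT n s t r d => (monomial (Phim s t (dec x)) (1 : k))) := by
    have hb := (MvPolynomial.basisMonomials (Vt n t r) k).linearIndependent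
    have hcomp := hb.comp (fun x : TgtT n s t r d => Phim s t (dec x)) hinj
    have : ((MvPolynomial.basisMonomials (Vt n t r) k : (Vt n t r →₀ ℕ) →
        MvPolynomial (Vt n t r) k) ∘ (fun x : TgtT n s t r d => Phim s t (dec x)))
        = fun x : TgtT n s t r d => (monomial (Phim s t (dec x)) (1 : k)) := by
      funext x
      rw [Function.comp_apply, MvPolynomial.coe_basisMonomials]
    rwa [this] at hcomp
  have hlin : LinearIndependent k f := by
    apply LinearIndependent.of_comp (psibar k n s t r hst).toLinearMap
    have : ((psibar k n s t r hst).toLinearMap ∘ f)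
        = fun x : TgtT n s t r d => (monomial (Phim s t (dec x)) (1 : k)) := by
      funext x
      rw [Function.comp_apply, AlgHom.toLinearMap_apply, hfdef]
      exact psibar_Pm hst (dec x)
    rw [this]
    exact hlinmon
  rw [hGeq, finrank_span_eq_card hlin]
  -- cardinality computation
  have hcard1 : Fintype.card (TgtT n s t r d)
      = (d * capC n s r + 1) *
        ((∏ i : {i : Fin n // i ∈ midFin n s t}, Fintype.card (Sym (Fin (r i.1)) d)) *
          Fintype.card (Sym (TailT n t r) d)) := by
    rw [Fintype.card_prod, Fintype.card_prod, Fintype.card_fin, Fintype.card_pi]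
  have hmid : ∀ i : Fin n, Fintype.card (Sym (Fin (r i)) d) = Nat.choose (d + r i - 1) d := by
    intro i
    rw [Sym.card_sym_eq_multichoose, Nat.multichoose_eq, Fintype.card_fin, Nat.add_comm]
  have htailcard : Fintype.card (TailT n t r)
      = ∏ i ∈ Finset.univ.filter (fun i : Fin n => t ≤ (i : ℕ)), r i := by
    rw [Fintype.card_pi]
    rw [Finset.prod_filter]
    apply Finset.prod_congr rfl
    intro i _
    rw [Fintype.card_fin, tlf]
  have htail : Fintype.card (Sym (TailT n t r) d)
      = Nat.choose (d + (∏ i ∈ Finset.univ.filter (fun i : Fin n => t ≤ (i : ℕ)), r i) - 1) d := by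
    rw [Sym.card_sym_eq_multichoose, Nat.multichoose_eq, htailcard, Nat.add_comm]
  have hmidprod : (∏ i : {i : Fin n // i ∈ midFin n s t}, Fintype.card (Sym (Fin (r i.1)) d))
      = ∏ i ∈ Finset.univ.filter (fun i : Fin n => s ≤ (i : ℕ) ∧ (i : ℕ) < t),
          Nat.choose (d + r i - 1) d := by
    rw [Finset.prod_coe_sort (midFin n s t) (fun i => Fintype.card (Sym (Fin (r i)) d))]
    rw [midFin]
    exact Finset.prod_congr rfl (fun i _ => hmid i)
  rw [hcard1, hmidprod, htail]
  show _ = (d * capC n s r + 1) * _ * _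
  ring

end HilbertAssemble
end

section
/- Let p denote the product of all distinct variables of R. Then Ĩ(s,t) = I(s,t) : p = I(s,t) : p^∞, where I(s,t) is generated by the slice minors f_{i,a,b} with d(a,b) = 2 and i ∈ [t], and Ĩ(s,t) is generated by all generalized minors f_{i,a,b} with i ∈ [t]. Moreover Ĩ(s,t) is the smallest prime ideal containing I(s,t) that contains no monomials. -/
open Finset

noncomputable instance (n s : ℕ) (r : Fin n → ℕ) : Fintype (IQ n s r) :=
  Fintype.ofFinite _

section Aux
variable {k : Type} [Field k] {n s t : ℕ} {r : Fin n → ℕ}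

lemma hammingDist_eq' (a b : Idx n r) :
    hammingDist a b = (univ.filter fun x => a x ≠ b x).card := rfl

lemma sw_eq_left {i : Fin n} {a b : Idx n r} (h : a i = b i) : sw i a b = a := by
  funext j
  simp only [sw]
  split_ifs with hj
  · subst hj; exact h.symm
  · rfl

lemma gminor_zero_of_eq {i : Fin n} {a b : Idx n r} (h : a i = b i) :
    gminor k s i a b = 0 := by
  rw [gminor, sw_eq_left h, sw_eq_left h.symm, sub_self]

lemma gminor_zero_of_dist_le_one {i : Fin n} {a b : Idx n r}
    (h : hammingDist a b ≤ 1) : gminor k s i a b = 0 := by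
  by_cases hi : a i = b i
  · exact gminor_zero_of_eq hi
  · have hoff : ∀ j, j ≠ i → a j = b j := by
      intro j hj
      by_contra hab
      have hsub : ({i, j} : Finset (Fin n)) ⊆ univ.filter fun x => a x ≠ b x := by
        intro x hx
        simp only [Finset.mem_insert, Finset.mem_singleton] at hx
        rcases hx with rfl | rfl <;> simp [hi, hab]
      have h2 : ({i, j} : Finset (Fin n)).card = 2 := by
        rw [Finset.card_insert_of_notMem (by simpa using (Ne.symm hj)), Finset.card_singleton]
      have := Finset.card_le_card hsub
      rw [h2] at this
      rw [hammingDist_eq'] at h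
      omega
    have h1 : sw i a b = b := by
      funext j; simp only [sw]; split_ifs with hj
      · rfl
      · exact hoff j hj
    have h2 : sw i b a = a := by
      funext j; simp only [sw]; split_ifs with hj
      · rfl
      · exact (hoff j hj).symm
    rw [gminor, h1, h2, mul_comm, sub_self]

lemma dist_sw_succ {j : Fin n} {a b : Idx n r} (h : a j ≠ b j) :
    hammingDist (sw j a b) b + 1 = hammingDist a b := by
  have hset : (univ.filter fun x => sw j a b x ≠ b x) =
      (univ.filter fun x => a x ≠ b x).erase j := by
    ext x
    simp only [Finset.mem_filter, Finset.mem_erase, Finset.mem_univ, true_and, sw]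
    constructor
    · intro hx
      by_cases hxj : x = j
      · subst hxj; simp at hx
      · simp [hxj] at hx; exact ⟨hxj, hx⟩
    · rintro ⟨hxj, hx⟩; simp [hxj]; exact hx
  have hmem : j ∈ (univ.filter fun x => a x ≠ b x) := by simp [h]
  rw [hammingDist_eq', hammingDist_eq', hset, Finset.card_erase_of_mem hmem]
  have : 1 ≤ (univ.filter fun x => a x ≠ b x).card := Finset.card_pos.2 ⟨j, hmem⟩
  omega

lemma dist_sw2 {i j : Fin n} {a b : Idx n r} (hi : a i ≠ b i) (hj : a j ≠ b j)
    (hij : j ≠ i) : hammingDist a (sw i (sw j a b) b) = 2 := by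
  have hset : (univ.filter fun x => a x ≠ sw i (sw j a b) b x) = ({i, j} : Finset (Fin n)) := by
    ext x
    rw [Finset.mem_filter]
    simp only [Finset.mem_filter, Finset.mem_univ, true_and, Finset.mem_insert,
      Finset.mem_singleton, sw]
    by_cases hxi : x = i
    · subst hxi; simp [hi]
    · by_cases hxj : x = j
      · subst hxj; simp [hxi, hj]
      · simp [hxi, hxj]
  rw [hammingDist_eq', hset, Finset.card_insert_of_notMem (by simpa using Ne.symm hij),
    Finset.card_singleton]

lemma class_ne {j : Fin n} {a b : Idx n r} (h : a j ≠ b j) :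
    Quotient.mk (sSetoid n s r) (sw j a b) ≠ Quotient.mk (sSetoid n s r) a := by
  intro heq
  have hE : sEquiv n s r (sw j a b) a := Quotient.exact heq
  have hswj : sw j a b j = b j := by simp [sw]
  have hswx : ∀ x, x ≠ j → sw j a b x = a x := by
    intro x hx; simp [sw, hx]
  rcases le_or_gt s (j : ℕ) with hsj | hsj
  · exact h ((hE.2 j hsj).symm.trans hswj)
  · have hjF : j ∈ univ.filter (fun x : Fin n => (x : ℕ) < s) := by simp [hsj]
    have h1 := hE.1
    rw [← Finset.add_sum_erase _ _ hjF, ← Finset.add_sum_erase _ (fun x => ((a x : ℕ)))  hjF] at h1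
    have h2 : ∑ x ∈ (univ.filter (fun x : Fin n => (x : ℕ) < s)).erase j, ((sw j a b) x : ℕ) =
        ∑ x ∈ (univ.filter (fun x : Fin n => (x : ℕ) < s)).erase j, (a x : ℕ) := by
      apply Finset.sum_congr rfl
      intro x hx
      rw [hswx x (Finset.ne_of_mem_erase hx)]
    rw [h2] at h1
    have h3 : ((sw j a b) j : ℕ) = (a j : ℕ) := by omega
    rw [hswj] at h3
    exact h (Fin.ext h3.symm)

end Aux

section Aux2
variable {k : Type} [Field k] {n s t : ℕ} {r : Fin n → ℕ}

noncomputable instance (n s : ℕ) (r : Fin n → ℕ) : DecidableEq (IQ n s r) :=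
  Classical.decEq _

lemma swap_identity (i j : Fin n) (hij : j ≠ i) (a b : Idx n r) :
    xvar k s (sw j a b) * gminor k s i a b =
      xvar k s a * gminor k s i (sw j a b) b +
      xvar k s (sw i b a) * gminor k s i a (sw i (sw j a b) b) := by
  have e1 : sw i b (sw j a b) = sw i b a := by
    funext x
    by_cases hx : x = i
    · subst hx; simp [sw, Ne.symm hij]
    · simp [sw, hx]
  have e2 : sw i a (sw i (sw j a b) b) = sw i a b := by
    funext x
    by_cases hx : x = i
    · subst hx; simp [sw]
    · simp [sw, hx]
  have e3 : sw i (sw i (sw j a b) b) a = sw j a b := by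
    funext x
    by_cases hx : x = i
    · subst hx; simp [sw, Ne.symm hij]
    · simp [sw, hx]
  simp only [gminor, e1, e2, e3]
  ring

open MvPolynomial in
lemma key_lemma : ∀ d : ℕ, ∀ (a b : Idx n r) (i : Fin n), (i : ℕ) < t →
    hammingDist a b ≤ d → ∀ w : IQ n s r,
    (∏ v ∈ univ.erase (Quotient.mk (sSetoid n s r) a), X v) * X w * gminor k s i a b
      ∈ ISlice k s t r := by
  classical
  intro d
  induction d with
  | zero =>
    intro a b i hi hd w
    have : a = b := by
      have := Nat.le_zero.mp hd
      exact eq_of_hammingDist_eq_zero this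
    subst this
    rw [gminor_zero_of_eq rfl, mul_zero]
    exact Ideal.zero_mem _
  | succ d IH =>
    intro a b i hi hd w
    by_cases hii : a i = b i
    · rw [gminor_zero_of_eq hii, mul_zero]; exact Ideal.zero_mem _
    by_cases h1 : hammingDist a b ≤ 1
    · rw [gminor_zero_of_dist_le_one h1, mul_zero]; exact Ideal.zero_mem _
    by_cases h22 : hammingDist a b = 2
    · exact Ideal.mul_mem_left _ _ (Ideal.subset_span ⟨i, a, b, hi, h22, rfl⟩)
    -- now hammingDist a b ≥ 3; find j ≠ i with a j ≠ b j
    have hex : ∃ j, j ≠ i ∧ a j ≠ b j := by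
      by_contra hco
      push_neg at hco
      have hsub : (univ.filter fun x => a x ≠ b x) ⊆ {i} := by
        intro x hx
        simp only [Finset.mem_filter, Finset.mem_univ, true_and] at hx
        simp only [Finset.mem_singleton]
        by_contra hxi
        exact hx (hco x hxi)
      have := Finset.card_le_card hsub
      rw [Finset.card_singleton] at this
      rw [hammingDist_eq'] at h1
      omega
    obtain ⟨j, hji, hjab⟩ := hex
    have hdist : hammingDist (sw j a b) b + 1 = hammingDist a b := dist_sw_succ hjab
    have hd' : hammingDist (sw j a b) b ≤ d := by omega
    have hne : Quotient.mk (sSetoid n s r) (sw j a b) ≠ Quotient.mk (sSetoid n s r) a :=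
      class_ne hjab
    have hgen : gminor k s i a (sw i (sw j a b) b) ∈ ISlice k s t r :=
      Ideal.subset_span ⟨i, a, _, hi, dist_sw2 hii hjab hji, rfl⟩
    have hIH := IH (sw j a b) b i hi hd' w
    have hmem : Quotient.mk (sSetoid n s r) (sw j a b) ∈
        univ.erase (Quotient.mk (sSetoid n s r) a) := Finset.mem_erase.2 ⟨hne, mem_univ _⟩
    have hmem' : Quotient.mk (sSetoid n s r) a ∈
        univ.erase (Quotient.mk (sSetoid n s r) (sw j a b)) :=
      Finset.mem_erase.2 ⟨hne.symm, mem_univ _⟩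
    have hq : (∏ v ∈ univ.erase (Quotient.mk (sSetoid n s r) a), (X v : MvPolynomial (IQ n s r) k)) =
        X (Quotient.mk (sSetoid n s r) (sw j a b)) *
          ∏ v ∈ (univ.erase (Quotient.mk (sSetoid n s r) a)).erase
            (Quotient.mk (sSetoid n s r) (sw j a b)), X v :=
      (Finset.mul_prod_erase _ _ hmem).symm
    have hq2 : (∏ v ∈ univ.erase (Quotient.mk (sSetoid n s r) (sw j a b)),
          (X v : MvPolynomial (IQ n s r) k)) =
        X (Quotient.mk (sSetoid n s r) a) *
          ∏ v ∈ (univ.erase (Quotient.mk (sSetoid n s r) a)).erase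
            (Quotient.mk (sSetoid n s r) (sw j a b)), X v := by
      rw [Finset.erase_right_comm]
      exact (Finset.mul_prod_erase _ _ hmem').symm
    have hid := swap_identity (k := k) (s := s) i j hji a b
    simp only [xvar] at hid
    have hsplit :
        (∏ v ∈ univ.erase (Quotient.mk (sSetoid n s r) a), (X v : MvPolynomial (IQ n s r) k)) *
            X w * gminor k s i a b =
          (∏ v ∈ univ.erase (Quotient.mk (sSetoid n s r) (sw j a b)), X v) * X w *
              gminor k s i (sw j a b) b +
          ((∏ v ∈ (univ.erase (Quotient.mk (sSetoid n s r) a)).erase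
              (Quotient.mk (sSetoid n s r) (sw j a b)), X v) * X w *
              X (Quotient.mk (sSetoid n s r) (sw i b a))) *
            gminor k s i a (sw i (sw j a b) b) := by
      rw [hq, hq2]
      linear_combination ((∏ v ∈ (univ.erase (Quotient.mk (sSetoid n s r) a)).erase
        (Quotient.mk (sSetoid n s r) (sw j a b)), (X v : MvPolynomial (IQ n s r) k)) * X w) * hid
    rw [hsplit]
    exact add_mem hIH (Ideal.mul_mem_left _ _ hgen)

end Aux2

section Aux3
variable {k : Type} [Field k] {n s t : ℕ} {r : Fin n → ℕ}

open MvPolynomial in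
lemma p_mul_mem (g : MvPolynomial (IQ n s r) k) (hg : g ∈ ITilde k s t r) :
    (∏ v : IQ n s r, X v) * g ∈ ISlice k s t r := by
  refine Submodule.span_induction ?_ ?_ ?_ ?_ hg
  · rintro f ⟨i, a, b, hi, rfl⟩
    have hkey := key_lemma (k := k) (hammingDist a b) a b i hi le_rfl
      (Quotient.mk (sSetoid n s r) a)
    have heq : (∏ v : IQ n s r, (X v : MvPolynomial (IQ n s r) k)) * gminor k s i a b =
        (∏ v ∈ univ.erase (Quotient.mk (sSetoid n s r) a), X v) *
          X (Quotient.mk (sSetoid n s r) a) * gminor k s i a b := by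
      rw [← Finset.mul_prod_erase univ _ (mem_univ (Quotient.mk (sSetoid n s r) a))]
      ring
    rw [heq]
    exact hkey
  · rw [mul_zero]; exact Ideal.zero_mem _
  · intro x y _ _ hx hy
    rw [mul_add]; exact add_mem hx hy
  · intro c x _ hx
    rw [smul_eq_mul, show (∏ v : IQ n s r, (X v : MvPolynomial (IQ n s r) k)) * (c * x) =
      c * ((∏ v : IQ n s r, X v) * x) by ring]
    exact Ideal.mul_mem_left _ _ hx

open MvPolynomial in
lemma ITilde_le_ker :
    ITilde k s t r ≤ RingHom.ker (eval (fun _ : IQ n s r => (1 : k))) := by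
  rw [ITilde, Ideal.span_le]
  rintro f ⟨i, a, b, hi, rfl⟩
  simp [RingHom.mem_ker, gminor, xvar]

open MvPolynomial in
lemma monomial_not_mem (u : IQ n s r →₀ ℕ) :
    MvPolynomial.monomial u (1 : k) ∉ ITilde k s t r := by
  intro hu
  have := ITilde_le_ker hu
  rw [RingHom.mem_ker, eval_monomial] at this
  simp [Finsupp.prod] at this

open MvPolynomial in
lemma p_not_mem_ITilde : (∏ v : IQ n s r, (X v : MvPolynomial (IQ n s r) k)) ∉ ITilde k s t r := by
  intro hu
  have := ITilde_le_ker hu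
  rw [RingHom.mem_ker] at this
  simp at this

lemma ISlice_le_ITilde : ISlice k s t r ≤ ITilde k s t r := by
  apply Ideal.span_mono
  rintro f ⟨i, a, b, hi, _, rfl⟩
  exact ⟨i, a, b, hi, rfl⟩

end Aux3


/-- with `p` the product of all the distinct variables of `R`, we have
`Ĩ(s,t) = I(s,t) : p = I(s,t) : p^∞`; moreover `Ĩ(s,t)` is the smallest prime ideal
containing `I(s,t)` and containing no monomials. -/
theorem ITilde_eq_colon (k : Type) [Field k] (n s t : ℕ) (r : Fin n → ℕ)
    (hr : ∀ i, 2 ≤ r i) (hs1 : 1 ≤ s) (hsn : s ≤ n) (ht1 : 1 ≤ t) (htn : t ≤ n)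
    (hprime : (ITilde k s t r).IsPrime)
    (p : MvPolynomial (IQ n s r) k) (hp : p = ∏ v : IQ n s r, MvPolynomial.X v) :
    ITilde k s t r = (ISlice k s t r).colon (Ideal.span {p}) ∧
    (∀ g, g ∈ ITilde k s t r ↔ ∃ m : ℕ, p ^ m * g ∈ ISlice k s t r) ∧
    ISlice k s t r ≤ ITilde k s t r ∧
    (∀ u : IQ n s r →₀ ℕ, MvPolynomial.monomial u (1 : k) ∉ ITilde k s t r) ∧
    (∀ P : Ideal (MvPolynomial (IQ n s r) k), P.IsPrime → ISlice k s t r ≤ P →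
      (∀ u : IQ n s r →₀ ℕ, MvPolynomial.monomial u (1 : k) ∉ P) →
      ITilde k s t r ≤ P) := by
  subst hp
  have hpmul : ∀ g ∈ ITilde k s t r,
      (∏ v : IQ n s r, MvPolynomial.X v) * g ∈ ISlice k s t r := fun g hg => p_mul_mem g hg
  have hpnot : (∏ v : IQ n s r, (MvPolynomial.X v : MvPolynomial (IQ n s r) k)) ∉ ITilde k s t r :=
    p_not_mem_ITilde
  refine ⟨?_, ?_, ISlice_le_ITilde, monomial_not_mem, ?_⟩
  · apply le_antisymm
    · intro g hg
      exact Ideal.mem_colon_span_singleton.mpr (by rw [mul_comm]; exact hpmul g hg)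
    · intro g hg
      have h1 : g * (∏ v : IQ n s r, MvPolynomial.X v) ∈ ISlice k s t r :=
        Ideal.mem_colon_span_singleton.mp hg
      have h2 := ISlice_le_ITilde h1
      rcases hprime.mem_or_mem h2 with h | h
      · exact h
      · exact absurd h hpnot
  · intro g
    constructor
    · intro hg
      exact ⟨1, by rw [pow_one]; exact hpmul g hg⟩
    · rintro ⟨m, hm⟩
      have haux : ∀ m (g : MvPolynomial (IQ n s r) k),
          (∏ v : IQ n s r, MvPolynomial.X v) ^ m * g ∈ ITilde k s t r → g ∈ ITilde k s t r := by
        intro m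
        induction m with
        | zero => intro g h; simpa using h
        | succ m ih =>
          intro g h
          have h' : (∏ v : IQ n s r, MvPolynomial.X v) ^ m *
              ((∏ v : IQ n s r, MvPolynomial.X v) * g) ∈ ITilde k s t r := by
            rw [← mul_assoc, ← pow_succ]; exact h
          rcases hprime.mem_or_mem (ih _ h') with h'' | h''
          · exact absurd h'' hpnot
          · exact h''
      exact haux m g (ISlice_le_ITilde hm)
  · intro P hP hIP hPmono g hg
    have hpg : (∏ v : IQ n s r, MvPolynomial.X v) * g ∈ P := hIP (hpmul g hg)
    have hpP : (∏ v : IQ n s r, (MvPolynomial.X v : MvPolynomial (IQ n s r) k)) ∉ P := by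
      intro hmem
      haveI := hP
      rw [Ideal.IsPrime.prod_mem_iff] at hmem
      obtain ⟨v, -, hv⟩ := hmem
      exact hPmono (Finsupp.single v 1) hv
    rcases hP.mem_or_mem hpg with h | h
    · exact absurd h hpP
    · exact h
end

section
/- For n ≥ 3 and s = n, the ideal I(n,t) generated by the slice minors has exactly two minimal primes: the prime Ĩ(n,t) generated by all generalized minors, and the monomial prime generated by all variables x_a with a not n-equivalent to (1,…,1) or (r_1,…,r_n). -/
open Finset

namespace SliceAux

open MvPolynomial

variable {n : ℕ} {r : Fin n → ℕ}

/-- total weight of an index -/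
def wsum (a : Idx n r) : ℕ := ∑ i, (a i : ℕ)

/-- the maximal weight -/
def msum (n : ℕ) (r : Fin n → ℕ) : ℕ := ∑ i, (r i - 1)

lemma wsum_le (a : Idx n r) : wsum a ≤ msum n r :=
  Finset.sum_le_sum fun i _ => Nat.le_sub_one_of_lt (a i).isLt

lemma sEquiv_n_iff (a b : Idx n r) : sEquiv n n r a b ↔ wsum a = wsum b := by
  unfold sEquiv wsum
  rw [Finset.filter_true_of_mem (fun i _ => i.isLt)]
  constructor
  · rintro ⟨h, -⟩; exact h
  · intro h; exact ⟨h, fun i hi => absurd i.isLt (by omega)⟩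

lemma mk_eq_mk_iff (a b : Idx n r) :
    Quotient.mk (sSetoid n n r) a = Quotient.mk (sSetoid n n r) b ↔ wsum a = wsum b := by
  rw [Quotient.eq]
  exact sEquiv_n_iff a b

lemma wsum_update (a : Idx n r) (i : Fin n) (v : Fin (r i)) :
    wsum (Function.update a i v) + (a i : ℕ) = wsum a + (v : ℕ) := by
  unfold wsum
  rw [← Finset.add_sum_erase Finset.univ _ (Finset.mem_univ i),
    ← Finset.add_sum_erase Finset.univ (fun j => ((a j : ℕ))) (Finset.mem_univ i)]
  have : ∀ j ∈ Finset.univ.erase i, ((Function.update a i v j : ℕ)) = (a j : ℕ) := by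
    intro j hj
    rw [Function.update_of_ne (Finset.ne_of_mem_erase hj)]
  rw [Finset.sum_congr rfl this, Function.update_self]
  omega

/-- greedy filling lemma -/
lemma exists_fill (hr1 : ∀ i, 1 ≤ r i) (C : Fin n → ℕ) (hC : ∀ i, C i ≤ r i - 1)
    (u : ℕ) (hu : u ≤ ∑ i, C i) :
    ∃ a : Idx n r, wsum a = u ∧ ∀ i, (a i : ℕ) ≤ C i := by
  induction u with
  | zero =>
    refine ⟨fun i => ⟨0, hr1 i⟩, ?_, fun i => Nat.zero_le _⟩
    simp [wsum]
  | succ u ih =>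
    obtain ⟨a, ha, hle⟩ := ih (by omega)
    have : ∃ i, (a i : ℕ) < C i := by
      by_contra h
      push_neg at h
      have : ∑ i, C i ≤ wsum a := Finset.sum_le_sum fun i _ => h i
      omega
    obtain ⟨i, hi⟩ := this
    have hlt : (a i : ℕ) + 1 < r i := by have := hC i; have := hr1 i; omega
    refine ⟨Function.update a i ⟨(a i : ℕ) + 1, hlt⟩, ?_, ?_⟩
    · have := wsum_update a i ⟨(a i : ℕ) + 1, hlt⟩
      simp at this; omega
    · intro j
      rcases eq_or_ne j i with rfl | hj
      · rw [Function.update_self]; exact hi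
      · rw [Function.update_of_ne hj]; exact hle j


lemma exists_rep (hr1 : ∀ i, 1 ≤ r i) (c : ℕ) (hc : c ≤ msum n r) :
    ∃ a : Idx n r, wsum a = c := by
  obtain ⟨a, ha, -⟩ := exists_fill hr1 (fun i => r i - 1) (fun i => le_rfl) c hc
  exact ⟨a, ha⟩

/-- a chosen representative of weight `c` -/
noncomputable def rep (hr1 : ∀ i, 1 ≤ r i) (c : ℕ) : Idx n r :=
  if h : c ≤ msum n r then (exists_rep hr1 c h).choose else fun i => ⟨0, hr1 i⟩

lemma wsum_rep (hr1 : ∀ i, 1 ≤ r i) {c : ℕ} (hc : c ≤ msum n r) :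
    wsum (rep hr1 c) = c := by
  rw [rep, dif_pos hc]
  exact (exists_rep hr1 c hc).choose_spec

variable (k : Type) [CommRing k]

/-- the variable of weight `c` -/
noncomputable def Y (hr1 : ∀ i, 1 ≤ r i) (c : ℕ) : MvPolynomial (IQ n n r) k :=
  MvPolynomial.X (Quotient.mk (sSetoid n n r) (rep hr1 c))

variable {k}

lemma xvar_eq_Y (hr1 : ∀ i, 1 ≤ r i) (a : Idx n r) :
    xvar k n a = Y k hr1 (wsum a) := by
  unfold xvar Y
  congr 1
  rw [mk_eq_mk_iff, wsum_rep hr1 (wsum_le a)]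

lemma X_eq_Y (hr1 : ∀ i, 1 ≤ r i) (v : IQ n n r) :
    (MvPolynomial.X v : MvPolynomial (IQ n n r) k) = Y k hr1 (Quotient.lift wsum
      (fun a b h => (sEquiv_n_iff a b).mp h) v) := by
  induction v using Quotient.ind with
  | _ a => exact xvar_eq_Y hr1 a

/-- weight of a class -/
def wq : IQ n n r → ℕ := Quotient.lift wsum (fun a b h => (sEquiv_n_iff a b).mp h)

lemma wq_mk (a : Idx n r) : wq (Quotient.mk (sSetoid n n r) a) = wsum a := rfl

lemma wq_le (v : IQ n n r) : wq v ≤ msum n r := by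
  induction v using Quotient.ind with
  | _ a => exact wsum_le a

lemma wq_rep (hr1 : ∀ i, 1 ≤ r i) {c : ℕ} (hc : c ≤ msum n r) :
    wq (Quotient.mk (sSetoid n n r) (rep hr1 c : Idx n r)) = c := by
  rw [wq_mk, wsum_rep hr1 hc]

lemma X_eq_Y' (hr1 : ∀ i, 1 ≤ r i) (v : IQ n n r) :
    (MvPolynomial.X v : MvPolynomial (IQ n n r) k) = Y k hr1 (wq v) :=
  X_eq_Y hr1 v

lemma wq_inj {v w : IQ n n r} (h : wq v = wq w) : v = w := by
  induction v using Quotient.ind with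
  | _ a =>
  induction w using Quotient.ind with
  | _ b =>
  rw [wq_mk, wq_mk] at h
  exact (mk_eq_mk_iff a b).mpr h

lemma wsum_sw (i : Fin n) (a b : Idx n r) :
    wsum (sw i a b) + (a i : ℕ) = wsum a + (b i : ℕ) := by
  have : sw i a b = Function.update a i (b i) := by
    funext j
    unfold sw
    rcases eq_or_ne j i with rfl | hj
    · rw [if_pos rfl, Function.update_self]
    · rw [if_neg hj, Function.update_of_ne hj]
  rw [this]
  exact wsum_update a i (b i)

lemma wsum_sw_add (i : Fin n) (a b : Idx n r) :
    wsum (sw i a b) + wsum (sw i b a) = wsum a + wsum b := by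
  have h1 := wsum_sw i a b
  have h2 := wsum_sw i b a
  omega

lemma gminor_eq (hr1 : ∀ i, 1 ≤ r i) (i : Fin n) (a b : Idx n r) :
    gminor k n i a b = Y k hr1 (wsum a) * Y k hr1 (wsum b)
      - Y k hr1 (wsum (sw i a b)) * Y k hr1 (wsum (sw i b a)) := by
  unfold gminor
  rw [xvar_eq_Y hr1 a, xvar_eq_Y hr1 b, xvar_eq_Y hr1 (sw i a b), xvar_eq_Y hr1 (sw i b a)]


lemma sum_split (f : Fin n → ℕ) (i0 : Fin n) :
    ∑ i, f i = f i0 + ∑ i ∈ Finset.univ.erase i0, f i :=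
  (Finset.add_sum_erase _ f (Finset.mem_univ i0)).symm

lemma mprime_pos (hn : 2 ≤ n) (hr2 : ∀ i, 2 ≤ r i) (i0 : Fin n) :
    r i0 - 1 + 1 ≤ msum n r := by
  have h0 : (0 : ℕ) < n := by omega
  obtain ⟨j, hj⟩ : ∃ j : Fin n, j ≠ i0 := by
    rcases eq_or_ne i0 ⟨0, h0⟩ with rfl | h
    · exact ⟨⟨1, by omega⟩, by simp [Fin.ext_iff]⟩
    · exact ⟨⟨0, h0⟩, fun hh => h hh.symm⟩
  have hsplit := sum_split (fun i => r i - 1) i0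
  have hj' : j ∈ Finset.univ.erase i0 := Finset.mem_erase.mpr ⟨hj, Finset.mem_univ j⟩
  have hle : r j - 1 ≤ ∑ i ∈ Finset.univ.erase i0, (r i - 1) :=
    Finset.single_le_sum (f := fun i => r i - 1) (fun i _ => Nat.zero_le _) hj'
  have := hr2 j
  unfold msum
  omega

lemma exists_with_head (hr1 : ∀ i, 1 ≤ r i) (i0 : Fin n) (a0 p : ℕ)
    (h0 : a0 + 1 ≤ r i0) (h1 : a0 ≤ p) (h2 : p ≤ a0 + (msum n r - (r i0 - 1))) :
    ∃ a : Idx n r, (a i0 : ℕ) = a0 ∧ wsum a = p := by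
  set C : Fin n → ℕ := fun i => if i = i0 then 0 else r i - 1 with hCdef
  have hCsum : (r i0 - 1) + ∑ i, C i = msum n r := by
    have h1' := sum_split C i0
    have h2' := sum_split (fun i => r i - 1) i0
    have h3' : ∑ i ∈ Finset.univ.erase i0, C i
        = ∑ i ∈ Finset.univ.erase i0, (r i - 1) := by
      refine Finset.sum_congr rfl fun j hj => ?_
      rw [hCdef]
      simp only [if_neg (Finset.ne_of_mem_erase hj)]
    have hC0 : C i0 = 0 := by simp [hCdef]
    unfold msum
    omega
  have hle : r i0 - 1 ≤ msum n r := by omega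
  obtain ⟨a, ha, haC⟩ := exists_fill hr1 C
    (fun i => by by_cases h : i = i0 <;> simp [hCdef, h]) (p - a0) (by omega)
  have hai0 : (a i0 : ℕ) = 0 := by
    have := haC i0
    simp [hCdef] at this
    exact this
  refine ⟨Function.update a i0 ⟨a0, h0⟩, ?_, ?_⟩
  · rw [Function.update_self]
  · have := wsum_update a i0 ⟨a0, h0⟩
    simp only at this
    omega

lemma arith_move (R0 m' p q : ℕ) (h1 : 1 ≤ R0) (h2 : 1 ≤ m') (h3 : p + 2 ≤ q)
    (h4 : q ≤ m' + R0) :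
    ∃ a0 b0 : ℕ, a0 ≤ R0 ∧ b0 ≤ R0 ∧ a0 ≤ p ∧ p ≤ a0 + m' ∧ b0 ≤ q ∧ q ≤ b0 + m' ∧
      a0 < b0 ∧ b0 + p < a0 + q := by
  rcases le_total p R0 with hp | hp
  · rcases le_or_gt q (m' + p + 1) with hc | hc
    · exact ⟨q - m' - 1, q - m' - 1 + 1, by omega, by omega, by omega, by omega,
        by omega, by omega, by omega, by omega⟩
    · exact ⟨p, q - m', by omega, by omega, by omega, by omega, by omega, by omega,
        by omega, by omega⟩
  · exact ⟨q - m' - 1, q - m' - 1 + 1, by omega, by omega, by omega, by omega,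
      by omega, by omega, by omega, by omega⟩

lemma exists_move (hn : 2 ≤ n) (hr2 : ∀ i, 2 ≤ r i) {p q : ℕ} (h3 : p + 2 ≤ q)
    (hq : q ≤ msum n r) :
    ∃ a b : Idx n r, wsum a = p ∧ wsum b = q ∧
      (a ⟨0, by omega⟩ : ℕ) < (b ⟨0, by omega⟩ : ℕ) ∧
      (b ⟨0, by omega⟩ : ℕ) + p < (a ⟨0, by omega⟩ : ℕ) + q := by
  have hr1 : ∀ i, 1 ≤ r i := fun i => le_trans one_le_two (hr2 i)
  set i0 : Fin n := ⟨0, by omega⟩ with hi0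
  set R0 := r i0 - 1 with hR0
  set m' := msum n r - R0 with hm'
  have hmp := mprime_pos hn hr2 i0
  have hR1 : 1 ≤ R0 := by have := hr2 i0; omega
  have hm1 : 1 ≤ m' := by omega
  have hq' : q ≤ m' + R0 := by omega
  obtain ⟨a0, b0, ha0R, hb0R, ha0p, hpa0, hb0q, hqb0, hab, hwidth⟩ :=
    arith_move R0 m' p q hR1 hm1 h3 hq'
  obtain ⟨a, hai, hap⟩ := exists_with_head hr1 i0 a0 p (by omega) ha0p (by omega)
  obtain ⟨b, hbi, hbq⟩ := exists_with_head hr1 i0 b0 q (by omega) hb0q (by omega)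
  exact ⟨a, b, hap, hbq, by omega, by omega⟩


lemma gminor_mem_ITilde {t : ℕ} (i : Fin n) (hi : (i : ℕ) < t) (a b : Idx n r) :
    gminor k n i a b ∈ ITilde k n t r :=
  Ideal.subset_span ⟨i, a, b, hi, rfl⟩

lemma bal_step (hn : 2 ≤ n) (hr2 : ∀ i, 2 ≤ r i) (hr1 : ∀ i, 1 ≤ r i) {t : ℕ}
    (ht1 : 1 ≤ t) {p q : ℕ} (h3 : p + 2 ≤ q) (hq : q ≤ msum n r) :
    ∃ w1 w2, w1 ≤ w2 ∧ w2 ≤ msum n r ∧ w1 + w2 = p + q ∧ w2 - w1 + 2 ≤ q - p ∧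
      Y k hr1 p * Y k hr1 q - Y k hr1 w1 * Y k hr1 w2 ∈ ITilde k n t r := by
  obtain ⟨a, b, hap, hbq, hab, hwidth⟩ := exists_move hn hr2 h3 hq
  set i0 : Fin n := ⟨0, by omega⟩ with hi0
  have hi0v : (i0 : ℕ) = 0 := rfl
  have hmem := gminor_mem_ITilde (k := k) (t := t) i0 (by omega) a b
  rw [gminor_eq hr1] at hmem
  set w1 := wsum (sw i0 a b) with hw1
  set w2 := wsum (sw i0 b a) with hw2
  have hsw1 := wsum_sw i0 a b
  have hsw2 := wsum_sw_add i0 a b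
  rw [hap, hbq] at hmem
  rw [hap] at hsw1
  rw [hap, hbq] at hsw2
  have hb1 : w1 = p + ((b i0 : ℕ) - (a i0 : ℕ)) := by omega
  have hrange : p + 1 ≤ w1 ∧ w1 + 1 ≤ q := by omega
  have hrange2 : p + 1 ≤ w2 ∧ w2 + 1 ≤ q := by omega
  rcases le_total w1 w2 with h | h
  · exact ⟨w1, w2, h, by omega, by omega, by omega, hmem⟩
  · refine ⟨w2, w1, h, by omega, by omega, by omega, ?_⟩
    rw [mul_comm (Y k hr1 w2) (Y k hr1 w1)]
    exact hmem

lemma hankel_ordered_gen (hr1 : ∀ i, 1 ≤ r i) (m0 : ℕ)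
    (J : Ideal (MvPolynomial (IQ n n r) k))
    (step : ∀ p q, p + 2 ≤ q → q ≤ m0 → ∃ w1 w2, w1 ≤ w2 ∧ w2 ≤ m0 ∧
      w1 + w2 = p + q ∧ w2 - w1 + 2 ≤ q - p ∧
      Y k hr1 p * Y k hr1 q - Y k hr1 w1 * Y k hr1 w2 ∈ J) :
    ∀ D p q p' q', p ≤ q → p' ≤ q' → q ≤ m0 → q' ≤ m0 → p + q = p' + q' →
      (q - p) + (q' - p') ≤ D →
      Y k hr1 p * Y k hr1 q - Y k hr1 p' * Y k hr1 q' ∈ J := by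
  intro D
  induction D with
  | zero =>
    intro p q p' q' h1 h2 h3 h4 h5 h6
    have hp : p = p' := by omega
    have hq : q = q' := by omega
    rw [hp, hq, sub_self]
    exact Ideal.zero_mem _
  | succ D ih =>
    intro p q p' q' h1 h2 h3 h4 h5 h6
    by_cases hgap : p + 2 ≤ q
    · obtain ⟨w1, w2, hw12, hw2m, hsum, hwidth, hmem⟩ := step p q hgap h3
      have h2' := ih w1 w2 p' q' hw12 h2 hw2m h4 (by omega) (by omega)
      have heq : Y k hr1 p * Y k hr1 q - Y k hr1 p' * Y k hr1 q'
          = (Y k hr1 p * Y k hr1 q - Y k hr1 w1 * Y k hr1 w2)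
            + (Y k hr1 w1 * Y k hr1 w2 - Y k hr1 p' * Y k hr1 q') := by ring
      rw [heq]
      exact Ideal.add_mem _ hmem h2'
    · by_cases hgap' : p' + 2 ≤ q'
      · obtain ⟨w1, w2, hw12, hw2m, hsum, hwidth, hmem⟩ := step p' q' hgap' h4
        have h2' := ih p q w1 w2 h1 hw12 h3 hw2m (by omega) (by omega)
        have heq : Y k hr1 p * Y k hr1 q - Y k hr1 p' * Y k hr1 q'
            = (Y k hr1 p * Y k hr1 q - Y k hr1 w1 * Y k hr1 w2)
              - (Y k hr1 p' * Y k hr1 q' - Y k hr1 w1 * Y k hr1 w2) := by ring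
        rw [heq]
        exact Ideal.sub_mem _ h2' hmem
      · have hp : p = p' := by omega
        have hq : q = q' := by omega
        rw [hp, hq, sub_self]
        exact Ideal.zero_mem _

lemma hankel_gen (hr1 : ∀ i, 1 ≤ r i) (m0 : ℕ)
    (J : Ideal (MvPolynomial (IQ n n r) k))
    (step : ∀ p q, p + 2 ≤ q → q ≤ m0 → ∃ w1 w2, w1 ≤ w2 ∧ w2 ≤ m0 ∧
      w1 + w2 = p + q ∧ w2 - w1 + 2 ≤ q - p ∧
      Y k hr1 p * Y k hr1 q - Y k hr1 w1 * Y k hr1 w2 ∈ J)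
    {p q p' q' : ℕ} (hp : p ≤ m0) (hq : q ≤ m0)
    (hp' : p' ≤ m0) (hq' : q' ≤ m0) (hsum : p + q = p' + q') :
    Y k hr1 p * Y k hr1 q - Y k hr1 p' * Y k hr1 q' ∈ J := by
  rcases le_total p q with h | h <;> rcases le_total p' q' with h' | h'
  · exact hankel_ordered_gen hr1 m0 J step _ p q p' q' h h' hq hq' hsum le_rfl
  · rw [mul_comm (Y k hr1 p') (Y k hr1 q')]
    exact hankel_ordered_gen hr1 m0 J step _ p q q' p' h h' hq hp' (by omega) le_rfl
  · rw [mul_comm (Y k hr1 p) (Y k hr1 q)]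
    exact hankel_ordered_gen hr1 m0 J step _ q p p' q' h h' hp hq' (by omega) le_rfl
  · rw [mul_comm (Y k hr1 p) (Y k hr1 q), mul_comm (Y k hr1 p') (Y k hr1 q')]
    exact hankel_ordered_gen hr1 m0 J step _ q p q' p' h h' hp hp' (by omega) le_rfl

lemma hankel_mem_ITilde (hn : 2 ≤ n) (hr2 : ∀ i, 2 ≤ r i) (hr1 : ∀ i, 1 ≤ r i) {t : ℕ}
    (ht1 : 1 ≤ t) {p q p' q' : ℕ} (hp : p ≤ msum n r) (hq : q ≤ msum n r)
    (hp' : p' ≤ msum n r) (hq' : q' ≤ msum n r) (hsum : p + q = p' + q') :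
    Y k hr1 p * Y k hr1 q - Y k hr1 p' * Y k hr1 q' ∈ ITilde k n t r :=
  hankel_gen hr1 (msum n r) _ (fun p q h3 hqm => bal_step hn hr2 hr1 ht1 h3 hqm)
    hp hq hp' hq' hsum

variable (k)

/-- the toric parametrization map -/
noncomputable def phi (n : ℕ) (r : Fin n → ℕ) :
    MvPolynomial (IQ n n r) k →ₐ[k] MvPolynomial (Fin 2) k :=
  MvPolynomial.aeval (fun v : IQ n n r =>
    MvPolynomial.X 0 ^ (wq v) * MvPolynomial.X 1 ^ (msum n r - wq v))

variable {k}

lemma phi_X (v : IQ n n r) :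
    phi k n r (MvPolynomial.X v)
      = MvPolynomial.X 0 ^ (wq v) * MvPolynomial.X 1 ^ (msum n r - wq v) :=
  MvPolynomial.aeval_X _ v

lemma phi_Y (hr1 : ∀ i, 1 ≤ r i) {c : ℕ} (hc : c ≤ msum n r) :
    phi k n r (Y k hr1 c)
      = MvPolynomial.X 0 ^ c * MvPolynomial.X 1 ^ (msum n r - c) := by
  unfold Y
  rw [phi_X, wq_rep hr1 hc]

lemma mulXX {p q : ℕ} (hp : p ≤ msum n r) (hq : q ≤ msum n r) :
    (MvPolynomial.X 0 ^ p * MvPolynomial.X 1 ^ (msum n r - p))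
      * (MvPolynomial.X 0 ^ q * MvPolynomial.X 1 ^ (msum n r - q))
      = (MvPolynomial.X (R := k) (0 : Fin 2) ^ (p + q)
          * MvPolynomial.X 1 ^ (2 * msum n r - (p + q))) := by
  rw [mul_mul_mul_comm, ← pow_add, ← pow_add]
  congr 1
  congr 1
  omega

lemma ITilde_le_ker {t : ℕ} :
    ITilde k n t r ≤ RingHom.ker (phi k n r).toRingHom := by
  rw [ITilde, Ideal.span_le]
  rintro f ⟨i, a, b, hit, rfl⟩
  simp only [SetLike.mem_coe, RingHom.mem_ker]
  show phi k n r (gminor k n i a b) = 0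
  unfold gminor xvar
  rw [map_sub, map_mul, map_mul, phi_X, phi_X, phi_X, phi_X]
  rw [wq_mk, wq_mk, wq_mk, wq_mk]
  rw [mulXX (wsum_le a) (wsum_le b), mulXX (wsum_le _) (wsum_le _), wsum_sw_add]
  exact sub_self _

/-- degree of an exponent vector -/
def degE (e : IQ n n r →₀ ℕ) : ℕ := e.sum fun _ m => m
/-- total weight of an exponent vector -/
def sigE (e : IQ n n r →₀ ℕ) : ℕ := e.sum fun v m => m * wq v
/-- quadratic measure of an exponent vector -/
def muE (e : IQ n n r →₀ ℕ) : ℕ := e.sum fun v m => m * (wq v * wq v)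

lemma degE_add (f g : IQ n n r →₀ ℕ) : degE (f + g) = degE f + degE g :=
  Finsupp.sum_add_index' (fun _ => rfl) (fun _ _ _ => rfl)

lemma sigE_add (f g : IQ n n r →₀ ℕ) : sigE (f + g) = sigE f + sigE g :=
  Finsupp.sum_add_index' (fun _ => zero_mul _) (fun _ b₁ b₂ => add_mul b₁ b₂ _)

lemma muE_add (f g : IQ n n r →₀ ℕ) : muE (f + g) = muE f + muE g :=
  Finsupp.sum_add_index' (fun _ => zero_mul _) (fun _ b₁ b₂ => add_mul b₁ b₂ _)

lemma degE_single (v : IQ n n r) (c : ℕ) : degE (Finsupp.single v c) = c :=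
  Finsupp.sum_single_index rfl

lemma sigE_single (v : IQ n n r) (c : ℕ) : sigE (Finsupp.single v c) = c * wq v :=
  Finsupp.sum_single_index (zero_mul _)

lemma muE_single (v : IQ n n r) (c : ℕ) : muE (Finsupp.single v c) = c * (wq v * wq v) :=
  Finsupp.sum_single_index (zero_mul _)

lemma sigE_le (e : IQ n n r →₀ ℕ) : sigE e ≤ degE e * msum n r := by
  unfold sigE degE
  rw [Finsupp.sum, Finsupp.sum, Finset.sum_mul]
  exact Finset.sum_le_sum fun v _ => Nat.mul_le_mul_left _ (wq_le v)

variable (k)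

/-- the canonical (balanced) monomial of degree `d` and weight `s` -/
noncomputable def can (hr1 : ∀ i, 1 ≤ r i) (d s : ℕ) : MvPolynomial (IQ n n r) k :=
  Y k hr1 (s / d) ^ (d - s % d) * Y k hr1 (s / d + 1) ^ (s % d)

variable {k}

lemma support_decomp {e : IQ n n r →₀ ℕ} {v v' : IQ n n r} (hvv' : v ≠ v')
    (hv : 1 ≤ e v) (hv' : 1 ≤ e v') :
    e = (e - Finsupp.single v 1 - Finsupp.single v' 1) + Finsupp.single v 1
      + Finsupp.single v' 1 := by
  ext z
  simp only [Finsupp.add_apply, Finsupp.tsub_apply]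
  rcases eq_or_ne v z with rfl | hzv
  · rw [Finsupp.single_eq_same, Finsupp.single_eq_of_ne' (Ne.symm hvv')]
    omega
  · rw [Finsupp.single_eq_of_ne' hzv]
    rcases eq_or_ne v' z with rfl | hzv'
    · rw [Finsupp.single_eq_same]; omega
    · rw [Finsupp.single_eq_of_ne' hzv']; omega

lemma monomial_decomp (e'' : IQ n n r →₀ ℕ) (v v' : IQ n n r) :
    (MvPolynomial.monomial (e'' + Finsupp.single v 1 + Finsupp.single v' 1) (1 : k))
      = MvPolynomial.monomial e'' 1 * MvPolynomial.X v * MvPolynomial.X v' := by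
  rw [MvPolynomial.X, MvPolynomial.X, MvPolynomial.monomial_mul,
    MvPolynomial.monomial_mul, one_mul, one_mul]

lemma sq_move {A B : ℕ} (h : A + 2 ≤ B) :
    (A + 1) * (A + 1) + (B - 1) * (B - 1) < A * A + B * B := by
  obtain ⟨b, rfl⟩ : ∃ b, B = b + 1 := ⟨B - 1, by omega⟩
  rw [Nat.add_sub_cancel]
  nlinarith

lemma monomial_decomp2 (v v' : IQ n n r) (a b : ℕ) :
    (MvPolynomial.monomial (Finsupp.single v a + Finsupp.single v' b) (1 : k))
      = MvPolynomial.X v ^ a * MvPolynomial.X v' ^ b := by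
  rw [MvPolynomial.X_pow_eq_monomial, MvPolynomial.X_pow_eq_monomial,
    MvPolynomial.monomial_mul, one_mul]

lemma NF (hn : 2 ≤ n) (hr2 : ∀ i, 2 ≤ r i) (hr1 : ∀ i, 1 ≤ r i) {t : ℕ} (ht1 : 1 ≤ t) :
    ∀ N (e : IQ n n r →₀ ℕ), muE e ≤ N →
      (MvPolynomial.monomial e 1 : MvPolynomial (IQ n n r) k)
        - can k hr1 (degE e) (sigE e) ∈ ITilde k n t r := by
  intro N
  induction N using Nat.strong_induction_on with
  | _ N ih =>
  intro e hN
  classical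
  by_cases hbal : ∃ v ∈ e.support, ∃ v' ∈ e.support, wq v + 2 ≤ wq v'
  · -- unbalanced : perform a balancing move
    obtain ⟨v, hv, v', hv', hgap⟩ := hbal
    have hev : 1 ≤ e v := Nat.one_le_iff_ne_zero.mpr (Finsupp.mem_support_iff.mp hv)
    have hev' : 1 ≤ e v' := Nat.one_le_iff_ne_zero.mpr (Finsupp.mem_support_iff.mp hv')
    have hvv' : v ≠ v' := fun h => by rw [h] at hgap; omega
    set c1 := wq v with hc1
    set c2 := wq v' with hc2
    have hc2m : c2 ≤ msum n r := wq_le v'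
    have hc1m : c1 + 1 ≤ msum n r := by omega
    have hc2m' : c2 - 1 ≤ msum n r := by omega
    set x1 : IQ n n r := Quotient.mk (sSetoid n n r) (rep hr1 (c1 + 1)) with hx1
    set x2 : IQ n n r := Quotient.mk (sSetoid n n r) (rep hr1 (c2 - 1)) with hx2
    have hwx1 : wq x1 = c1 + 1 := wq_rep hr1 hc1m
    have hwx2 : wq x2 = c2 - 1 := wq_rep hr1 hc2m'
    set e'' := e - Finsupp.single v 1 - Finsupp.single v' 1 with he''
    set e2 := e'' + Finsupp.single x1 1 + Finsupp.single x2 1 with he2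
    have hdece : e = e'' + Finsupp.single v 1 + Finsupp.single v' 1 :=
      support_decomp hvv' hev hev'
    -- statistics
    have hdeg : degE e2 = degE e := by
      rw [he2, hdece, degE_add, degE_add, degE_add, degE_add, degE_single, degE_single,
        degE_single, degE_single]
    have hsig : sigE e2 = sigE e := by
      rw [he2, hdece, sigE_add, sigE_add, sigE_add, sigE_add, sigE_single, sigE_single,
        sigE_single, sigE_single, hwx1, hwx2, ← hc1, ← hc2]
      omega
    have hmu : muE e2 < muE e := by
      rw [he2, hdece, muE_add, muE_add, muE_add, muE_add, muE_single, muE_single,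
        muE_single, muE_single, hwx1, hwx2, ← hc1, ← hc2]
      have hq := sq_move hgap
      omega
    -- the move itself
    have hbracket : (MvPolynomial.X v * MvPolynomial.X v' :
        MvPolynomial (IQ n n r) k) - MvPolynomial.X x1 * MvPolynomial.X x2
        ∈ ITilde k n t r := by
      rw [X_eq_Y' hr1 v, X_eq_Y' hr1 v', X_eq_Y' hr1 x1, X_eq_Y' hr1 x2,
        ← hc1, ← hc2, hwx1, hwx2]
      exact hankel_mem_ITilde hn hr2 hr1 ht1 (by omega) hc2m hc1m hc2m' (by omega)
    have hmove : (MvPolynomial.monomial e 1 : MvPolynomial (IQ n n r) k)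
        - MvPolynomial.monomial e2 1 ∈ ITilde k n t r := by
      have h1 : (MvPolynomial.monomial e 1 : MvPolynomial (IQ n n r) k)
          = MvPolynomial.monomial e'' 1 * MvPolynomial.X v * MvPolynomial.X v' := by
        rw [← monomial_decomp, ← hdece]
      have h2 : (MvPolynomial.monomial e2 1 : MvPolynomial (IQ n n r) k)
          = MvPolynomial.monomial e'' 1 * MvPolynomial.X x1 * MvPolynomial.X x2 := by
        rw [← monomial_decomp, ← he2]
      rw [h1, h2]
      have : MvPolynomial.monomial e'' (1 : k) * MvPolynomial.X v * MvPolynomial.X v'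
          - MvPolynomial.monomial e'' 1 * MvPolynomial.X x1 * MvPolynomial.X x2
          = MvPolynomial.monomial e'' 1
            * (MvPolynomial.X v * MvPolynomial.X v'
                - MvPolynomial.X x1 * MvPolynomial.X x2) := by ring
      rw [this]
      exact Ideal.mul_mem_left _ _ hbracket
    have hrest := ih (muE e2) (by omega) e2 le_rfl
    rw [hdeg, hsig] at hrest
    have : (MvPolynomial.monomial e 1 : MvPolynomial (IQ n n r) k)
        - can k hr1 (degE e) (sigE e)
        = ((MvPolynomial.monomial e 1 : MvPolynomial (IQ n n r) k)
            - MvPolynomial.monomial e2 1)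
          + (MvPolynomial.monomial e2 1 - can k hr1 (degE e) (sigE e)) := by ring
    rw [this]
    exact Ideal.add_mem _ hmove hrest
  · -- balanced : the monomial is canonical
    push_neg at hbal
    by_cases h0 : e = 0
    · subst h0
      have : (MvPolynomial.monomial (0 : IQ n n r →₀ ℕ) (1 : k)) = 1 := by
        simp [MvPolynomial.monomial_zero']
      rw [this]
      have hd : degE (0 : IQ n n r →₀ ℕ) = 0 := rfl
      have hs : sigE (0 : IQ n n r →₀ ℕ) = 0 := rfl
      rw [hd, hs]
      unfold can
      norm_num
    · have hne : e.support.Nonempty := Finsupp.support_nonempty_iff.mpr h0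
      obtain ⟨v0, hv0, hmin⟩ := Finset.exists_min_image e.support wq hne
      set q := wq v0 with hq
      have hall : ∀ v ∈ e.support, wq v = q ∨ wq v = q + 1 := by
        intro v hv
        have h1 := hmin v hv
        have h2 := hbal v0 hv0 v hv
        omega
      by_cases hB : ∃ v1 ∈ e.support, wq v1 = q + 1
      · -- two-value case
        obtain ⟨v1, hv1, hwv1⟩ := hB
        have hv01 : v0 ≠ v1 := fun h => by rw [h, hwv1] at hq; omega
        have hsub : e.support ⊆ {v0, v1} := by
          intro v hv
          rcases hall v hv with h | h
          · have : v = v0 := wq_inj (h.trans hq)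
            simp [this]
          · have : v = v1 := wq_inj (h.trans hwv1.symm)
            simp [this]
        set α := e v0 with hα
        set β := e v1 with hβ
        have hα1 : 1 ≤ α := Nat.one_le_iff_ne_zero.mpr (Finsupp.mem_support_iff.mp hv0)
        have hβ1 : 1 ≤ β := Nat.one_le_iff_ne_zero.mpr (Finsupp.mem_support_iff.mp hv1)
        have hdece : e = Finsupp.single v0 α + Finsupp.single v1 β := by
          ext z
          simp only [Finsupp.add_apply]
          rcases eq_or_ne v0 z with rfl | hz0
          · rw [Finsupp.single_eq_same, Finsupp.single_eq_of_ne' (Ne.symm hv01)]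
            omega
          · rw [Finsupp.single_eq_of_ne' hz0]
            rcases eq_or_ne v1 z with rfl | hz1
            · rw [Finsupp.single_eq_same, zero_add]
            · rw [Finsupp.single_eq_of_ne' hz1]
              have : z ∉ e.support := fun hzin => by
                rcases Finset.mem_insert.mp (hsub hzin) with h | h
                · exact hz0 h.symm
                · exact hz1 (Finset.mem_singleton.mp h).symm
              exact Finsupp.notMem_support_iff.mp this
        have hd : degE e = α + β := by rw [hdece, degE_add, degE_single, degE_single]
        have hs : sigE e = β + (α + β) * q := by
          rw [hdece, sigE_add, sigE_single, sigE_single, ← hq, hwv1]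
          ring
        have hdiv : sigE e / degE e = q := by
          rw [hs, hd, Nat.add_mul_div_left _ _ (by omega : 0 < α + β),
            Nat.div_eq_of_lt (by omega), zero_add]
        have hmod : sigE e % degE e = β := by
          rw [hs, hd, Nat.add_mul_mod_self_left, Nat.mod_eq_of_lt (by omega)]
        unfold can
        rw [hdiv, hmod, hd, show α + β - β = α by omega]
        rw [hdece, monomial_decomp2]
        rw [X_eq_Y' hr1 v0, X_eq_Y' hr1 v1, ← hq, hwv1]
        rw [sub_self]
        exact Ideal.zero_mem _
      · -- single-value case
        push_neg at hB
        have hsub : e.support ⊆ {v0} := by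
          intro v hv
          rcases hall v hv with h | h
          · have : v = v0 := wq_inj (h.trans hq)
            simp [this]
          · exact absurd h (hB v hv)
        have hdece : e = Finsupp.single v0 (e v0) :=
          Finsupp.support_subset_singleton.mp hsub
        set d := e v0 with hdd
        have hd1 : 1 ≤ d := Nat.one_le_iff_ne_zero.mpr (Finsupp.mem_support_iff.mp hv0)
        have hd : degE e = d := by rw [hdece, degE_single]
        have hs : sigE e = d * q := by rw [hdece, sigE_single, hq]
        have hdiv : sigE e / degE e = q := by
          rw [hs, hd, Nat.mul_div_cancel_left _ (by omega : 0 < d)]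
        have hmod : sigE e % degE e = 0 := by
          rw [hs, hd, Nat.mul_mod_right]
        unfold can
        rw [hdiv, hmod, hd]
        simp only [Nat.sub_zero, pow_zero, mul_one]
        rw [hdece, ← MvPolynomial.X_pow_eq_monomial, X_eq_Y' hr1 v0, ← hq]
        rw [sub_self]
        exact Ideal.zero_mem _


/-- exponent vector in the target ring -/
noncomputable def exd (m' : ℕ) (q : ℕ × ℕ) : Fin 2 →₀ ℕ :=
  Finsupp.single 0 q.2 + Finsupp.single 1 (q.1 * m' - q.2)

lemma exd_apply0 (m' : ℕ) (q : ℕ × ℕ) : exd m' q 0 = q.2 := by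
  unfold exd
  rw [Finsupp.add_apply, Finsupp.single_eq_same,
    Finsupp.single_eq_of_ne' (by decide : (1 : Fin 2) ≠ 0), add_zero]

lemma exd_apply1 (m' : ℕ) (q : ℕ × ℕ) : exd m' q 1 = q.1 * m' - q.2 := by
  unfold exd
  rw [Finsupp.add_apply, Finsupp.single_eq_same,
    Finsupp.single_eq_of_ne' (by decide : (0 : Fin 2) ≠ 1), zero_add]

lemma exd_inj {m' : ℕ} (hm : 1 ≤ m') {q q' : ℕ × ℕ} (h2 : q.2 ≤ q.1 * m')
    (h2' : q'.2 ≤ q'.1 * m') (h : exd m' q = exd m' q') : q = q' := by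
  have h0 : q.2 = q'.2 := by
    rw [← exd_apply0 m' q, ← exd_apply0 m' q', h]
  have h1 : q.1 * m' - q.2 = q'.1 * m' - q'.2 := by
    rw [← exd_apply1 m' q, ← exd_apply1 m' q', h]
  have hA : q.1 * m' = q'.1 * m' := by
    calc q.1 * m' = (q.1 * m' - q.2) + q.2 := by omega
    _ = (q'.1 * m' - q'.2) + q'.2 := by rw [h1, h0]
    _ = q'.1 * m' := by omega
  have := Nat.eq_of_mul_eq_mul_right (by omega : 0 < m') hA
  exact Prod.ext this h0

lemma XX_monomial (a b : ℕ) :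
    (MvPolynomial.X (0 : Fin 2) : MvPolynomial (Fin 2) k) ^ a * MvPolynomial.X 1 ^ b
      = MvPolynomial.monomial (Finsupp.single 0 a + Finsupp.single 1 b) 1 := by
  rw [MvPolynomial.X_pow_eq_monomial, MvPolynomial.X_pow_eq_monomial,
    MvPolynomial.monomial_mul, one_mul]

lemma phi_can (hr1 : ∀ i, 1 ≤ r i) {d s : ℕ} (hs : s ≤ d * msum n r) :
    phi k n r (can k hr1 d s) = MvPolynomial.monomial (exd (msum n r) (d, s)) 1 := by
  set m' := msum n r with hm'
  rcases Nat.eq_zero_or_pos d with rfl | hd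
  · have hs0 : s = 0 := by omega
    subst hs0
    unfold can exd
    norm_num
  · set q := s / d with hqdef
    set β := s % d with hβdef
    have hβd : β < d := Nat.mod_lt _ hd
    have hdm : d * q + β = s := Nat.div_add_mod s d
    have hqm : q ≤ m' := by
      have h1 : s / d ≤ (d * m') / d := Nat.div_le_div_right hs
      rwa [Nat.mul_div_cancel_left _ hd] at h1
    obtain ⟨α, hα⟩ : ∃ α, d = α + β := ⟨d - β, by omega⟩
    have hdsub : d - β = α := by omega
    unfold can
    rw [← hqdef, ← hβdef, hdsub]
    rcases Nat.eq_zero_or_pos β with hβ0 | hβpos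
    · -- pure power case
      have hαd : α = d := by omega
      have hsq : s = d * q := by omega
      rw [hβ0, pow_zero, mul_one, map_pow, phi_Y hr1 hqm]
      rw [mul_pow, ← pow_mul, ← pow_mul, XX_monomial]
      have hexp : (m' - q) * α = d * (m' - q) := by rw [hαd, Nat.mul_comm]
      have hsplit : d * m' = d * q + d * (m' - q) := by
        rw [← Nat.mul_add]
        congr 1
        omega
      have h1' : d * m' - s = (m' - q) * α := by rw [hexp]; omega
      have h0' : s = q * α := by rw [hαd, Nat.mul_comm]; exact hsq
      unfold exd
      simp only []
      rw [h1', h0']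
    · -- mixed case
      have hq1m : q + 1 ≤ m' := by
        by_contra hcon
        push_neg at hcon
        have hqm' : q = m' := by omega
        have h2 : s = d * m' := by
          have h3 : d * m' ≤ d * q := Nat.mul_le_mul_left d (le_of_eq hqm'.symm)
          omega
        have hz : β = 0 := by
          have h4 := Nat.mul_mod_right d m'
          rw [← h2] at h4
          omega
        omega
      rw [map_mul, map_pow, map_pow, phi_Y hr1 hqm, phi_Y hr1 hq1m]
      rw [mul_pow, mul_pow, mul_mul_mul_comm, ← pow_mul, ← pow_mul, ← pow_mul,
        ← pow_mul, ← pow_add, ← pow_add, XX_monomial]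
      obtain ⟨M, hM⟩ : ∃ M, m' = M + q + 1 := ⟨m' - q - 1, by omega⟩
      have e1 : m' - q = M + 1 := by omega
      have e2 : m' - (q + 1) = M := by omega
      rw [e1, e2]
      have hdm' : (α + β) * q + β = s := by rw [← hα]; exact hdm
      have hh : q * α + (q + 1) * β = (α + β) * q + β := by ring
      have h0' : s = q * α + (q + 1) * β := by omega
      have hkey : d * m' = ((α + β) * q + β) + ((M + 1) * α + M * β) := by
        rw [hα, hM]
        ring
      have h1' : d * m' - s = (M + 1) * α + M * β := by omega
      unfold exd
      simp only []
      rw [h1', h0']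


lemma ker_le_ITilde (hn : 2 ≤ n) (hr2 : ∀ i, 2 ≤ r i) (hr1 : ∀ i, 1 ≤ r i) {t : ℕ}
    (ht1 : 1 ≤ t) :
    RingHom.ker (phi k n r).toRingHom ≤ ITilde k n t r := by
  intro f hf
  classical
  set m' := msum n r with hm'
  have hm1 : 1 ≤ m' := by
    have := mprime_pos hn hr2 ⟨0, by omega⟩
    omega
  set g : MvPolynomial (IQ n n r) k :=
    ∑ e ∈ f.support, MvPolynomial.C (MvPolynomial.coeff e f)
      * can k hr1 (degE e) (sigE e) with hg
  have hfg : f - g ∈ ITilde k n t r := by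
    have hrepr : f - g = ∑ e ∈ f.support,
        ((MvPolynomial.monomial e) (MvPolynomial.coeff e f)
          - MvPolynomial.C (MvPolynomial.coeff e f) * can k hr1 (degE e) (sigE e)) := by
      rw [Finset.sum_sub_distrib, ← MvPolynomial.as_sum f, ← hg]
    rw [hrepr]
    refine Ideal.sum_mem _ fun e he => ?_
    have h1 : (MvPolynomial.monomial e) (MvPolynomial.coeff e f)
        = MvPolynomial.C (MvPolynomial.coeff e f) * MvPolynomial.monomial e 1 := by
      rw [MvPolynomial.C_mul_monomial, mul_one]
    rw [h1, ← mul_sub]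
    exact Ideal.mul_mem_left _ _ (NF hn hr2 hr1 ht1 (muE e) e le_rfl)
  have hgker : phi k n r g = 0 := by
    have h1 : phi k n r (f - g) = 0 := ITilde_le_ker hfg
    have h2 : phi k n r f = 0 := hf
    rw [map_sub, h2, zero_sub, neg_eq_zero] at h1
    exact h1
  set p : (IQ n n r →₀ ℕ) → ℕ × ℕ := fun e => (degE e, sigE e) with hp
  set F := f.support.image p with hF
  set lam : ℕ × ℕ → k := fun q =>
    ∑ e ∈ f.support.filter (fun e => p e = q), MvPolynomial.coeff e f with hlam
  have hbound : ∀ q ∈ F, q.2 ≤ q.1 * m' := by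
    intro q hq
    obtain ⟨e, he, rfl⟩ := Finset.mem_image.mp hq
    exact sigE_le e
  have hgrp : g = ∑ q ∈ F, MvPolynomial.C (lam q) * can k hr1 q.1 q.2 := by
    rw [hg, ← Finset.sum_fiberwise_of_maps_to
      (fun e he => Finset.mem_image_of_mem p he)
      (fun e => MvPolynomial.C (MvPolynomial.coeff e f) * can k hr1 (degE e) (sigE e))]
    refine Finset.sum_congr rfl fun q hq => ?_
    have hinner : ∀ e ∈ f.support.filter (fun e => p e = q),
        MvPolynomial.C (MvPolynomial.coeff e f) * can k hr1 (degE e) (sigE e)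
          = MvPolynomial.C (MvPolynomial.coeff e f) * can k hr1 q.1 q.2 := by
      intro e he
      have hpe : p e = q := (Finset.mem_filter.mp he).2
      rw [← hpe]
    rw [Finset.sum_congr rfl hinner, ← Finset.sum_mul, hlam]
    simp only [map_sum]
  have hphi : ∑ q ∈ F, MvPolynomial.monomial (exd m' q) (lam q) = 0 := by
    rw [← hgker, hgrp, map_sum]
    refine Finset.sum_congr rfl fun q hq => ?_
    rw [map_mul, phi_can hr1 (hbound q hq)]
    rw [show phi k n r (MvPolynomial.C (lam q)) = MvPolynomial.C (lam q) by
      simp [phi, MvPolynomial.algebraMap_eq]]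
    rw [MvPolynomial.C_mul_monomial, mul_one]
  have hlam0 : ∀ q0 ∈ F, lam q0 = 0 := by
    intro q0 hq0
    have hc := congrArg (MvPolynomial.coeff (exd m' q0)) hphi
    rw [MvPolynomial.coeff_sum, MvPolynomial.coeff_zero] at hc
    rw [Finset.sum_eq_single_of_mem q0 hq0 (fun q hq hne => ?_)] at hc
    · rwa [MvPolynomial.coeff_monomial, if_pos rfl] at hc
    · rw [MvPolynomial.coeff_monomial, if_neg]
      intro hcon
      exact hne (exd_inj hm1 (hbound q hq) (hbound q0 hq0) hcon)
  have hg0 : g = 0 := by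
    rw [hgrp]
    refine Finset.sum_eq_zero fun q hq => ?_
    rw [hlam0 q hq, map_zero, zero_mul]
  rw [hg0, sub_zero] at hfg
  exact hfg


variable (k)

open Classical in
/-- the projection onto the two extreme variables -/
noncomputable def psi (bq tq : IQ n n r) :
    MvPolynomial (IQ n n r) k →ₐ[k] MvPolynomial (IQ n n r) k :=
  MvPolynomial.aeval (fun v => if v = bq ∨ v = tq then MvPolynomial.X v else 0)

/-- the monomial prime -/
noncomputable def PId (bq tq : IQ n n r) : Ideal (MvPolynomial (IQ n n r) k) :=
  Ideal.span {f | ∃ v : IQ n n r, v ≠ bq ∧ v ≠ tq ∧ f = MvPolynomial.X v}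

variable {k}

lemma psi_X_of_mem {bq tq v : IQ n n r} (h : v = bq ∨ v = tq) :
    psi k bq tq (MvPolynomial.X v) = MvPolynomial.X v := by
  unfold psi
  rw [MvPolynomial.aeval_X]
  exact if_pos h

lemma psi_X_of_not_mem {bq tq v : IQ n n r} (h1 : v ≠ bq) (h2 : v ≠ tq) :
    psi k bq tq (MvPolynomial.X v) = 0 := by
  unfold psi
  rw [MvPolynomial.aeval_X]
  exact if_neg (by tauto)

lemma sub_psi_mem (bq tq : IQ n n r) (f : MvPolynomial (IQ n n r) k) :
    f - psi k bq tq f ∈ PId k bq tq := by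
  induction f using MvPolynomial.induction_on with
  | C a =>
    rw [show psi k bq tq (MvPolynomial.C a) = MvPolynomial.C a from
      MvPolynomial.aeval_C _ a, sub_self]
    exact Ideal.zero_mem _
  | add p q hp hq =>
    rw [map_add]
    have : p + q - (psi k bq tq p + psi k bq tq q)
        = (p - psi k bq tq p) + (q - psi k bq tq q) := by ring
    rw [this]
    exact Ideal.add_mem _ hp hq
  | mul_X p v hp =>
    rw [map_mul]
    by_cases h : v = bq ∨ v = tq
    · rw [psi_X_of_mem h]
      have : p * MvPolynomial.X v - psi k bq tq p * MvPolynomial.X v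
          = (p - psi k bq tq p) * MvPolynomial.X v := by ring
      rw [this]
      exact Ideal.mul_mem_right _ _ hp
    · push_neg at h
      rw [psi_X_of_not_mem h.1 h.2, mul_zero, sub_zero]
      exact Ideal.mul_mem_left _ _ (Ideal.subset_span ⟨v, h.1, h.2, rfl⟩)

lemma PId_eq_ker (bq tq : IQ n n r) :
    PId k bq tq = RingHom.ker (psi k bq tq).toRingHom := by
  apply le_antisymm
  · rw [PId, Ideal.span_le]
    rintro f ⟨v, h1, h2, rfl⟩
    simp only [SetLike.mem_coe, RingHom.mem_ker]
    exact psi_X_of_not_mem h1 h2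
  · intro f hf
    have h0 : psi k bq tq f = 0 := hf
    have := sub_psi_mem bq tq f
    rwa [h0, sub_zero] at this

lemma X_mem_PId {bq tq v : IQ n n r} (h1 : v ≠ bq) (h2 : v ≠ tq) :
    MvPolynomial.X v ∈ PId k bq tq :=
  Ideal.subset_span ⟨v, h1, h2, rfl⟩


lemma wsum_bot {bot' : Idx n r} (hbot : ∀ i, (bot' i : ℕ) = 0) : wsum bot' = 0 := by
  unfold wsum
  exact Finset.sum_eq_zero fun i _ => hbot i

lemma wsum_top {top' : Idx n r} (htop : ∀ i, (top' i : ℕ) = r i - 1) :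
    wsum top' = msum n r :=
  Finset.sum_congr rfl fun i _ => htop i

lemma eq_bot_of_wsum {a bot' : Idx n r} (hbot : ∀ i, (bot' i : ℕ) = 0)
    (h : wsum a = 0) : a = bot' := by
  funext i
  have := (Finset.sum_eq_zero_iff.mp h) i (Finset.mem_univ i)
  exact Fin.ext (by rw [this, hbot i])

lemma eq_top_of_wsum {a top' : Idx n r} (hr1 : ∀ i, 1 ≤ r i)
    (htop : ∀ i, (top' i : ℕ) = r i - 1) (h : wsum a = msum n r) : a = top' := by
  funext i
  refine Fin.ext ?_
  rw [htop i]
  by_contra hcon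
  have hlt : (a i : ℕ) < r i - 1 := by
    have h1 : (a i : ℕ) ≤ r i - 1 := Nat.le_sub_one_of_lt (a i).isLt
    omega
  have : wsum a < msum n r := by
    unfold wsum msum
    exact Finset.sum_lt_sum (fun j _ => Nat.le_sub_one_of_lt (a j).isLt)
      ⟨i, Finset.mem_univ i, hlt⟩
  omega

lemma dist_bot_top (hr2 : ∀ i, 2 ≤ r i) {bot' top' : Idx n r}
    (hbot : ∀ i, (bot' i : ℕ) = 0) (htop : ∀ i, (top' i : ℕ) = r i - 1) :
    hammingDist bot' top' = n := by
  unfold hammingDist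
  have : (Finset.univ.filter fun i => bot' i ≠ top' i) = Finset.univ := by
    refine Finset.filter_true_of_mem fun i _ => ?_
    intro hcon
    have := congrArg Fin.val hcon
    rw [hbot i, htop i] at this
    have := hr2 i
    omega
  rw [this, Finset.card_univ, Fintype.card_fin]

lemma dist_sw (i : Fin n) (a b : Idx n r) :
    hammingDist (sw i a b) (sw i b a) = hammingDist a b := by
  unfold hammingDist
  congr 1
  ext j
  simp only [Finset.mem_filter, Finset.mem_univ, true_and]
  unfold sw
  rcases eq_or_ne j i with rfl | hj
  · rw [if_pos rfl, if_pos rfl]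
    exact ne_comm
  · rw [if_neg hj, if_neg hj]

lemma pair_mem_PId (hn : 3 ≤ n) (hr1 : ∀ i, 1 ≤ r i) (hr2 : ∀ i, 2 ≤ r i)
    {bot' top' : Idx n r} (hbot : ∀ i, (bot' i : ℕ) = 0)
    (htop : ∀ i, (top' i : ℕ) = r i - 1) {a b : Idx n r}
    (hdist : hammingDist a b = 2) :
    xvar k n a * xvar k n b
      ∈ PId k (Quotient.mk (sSetoid n n r) bot') (Quotient.mk (sSetoid n n r) top') := by
  set bq := Quotient.mk (sSetoid n n r) bot' with hbq
  set tq := Quotient.mk (sSetoid n n r) top' with htq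
  have key : ∀ c : Idx n r, Quotient.mk (sSetoid n n r) c = bq ∨
      Quotient.mk (sSetoid n n r) c = tq → c = bot' ∨ c = top' := by
    intro c hc
    rcases hc with hc | hc
    · left
      rw [hbq, mk_eq_mk_iff, wsum_bot hbot] at hc
      exact eq_bot_of_wsum hbot hc
    · right
      rw [htq, mk_eq_mk_iff, wsum_top htop] at hc
      exact eq_top_of_wsum hr1 htop hc
  by_cases ha : Quotient.mk (sSetoid n n r) a ≠ bq ∧ Quotient.mk (sSetoid n n r) a ≠ tq
  · exact Ideal.mul_mem_right _ _ (X_mem_PId ha.1 ha.2)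
  · by_cases hb : Quotient.mk (sSetoid n n r) b ≠ bq ∧
        Quotient.mk (sSetoid n n r) b ≠ tq
    · exact Ideal.mul_mem_left _ _ (X_mem_PId hb.1 hb.2)
    · exfalso
      push_neg at ha hb
      have ha' : a = bot' ∨ a = top' := by
        by_cases h1 : Quotient.mk (sSetoid n n r) a = bq
        · exact key a (Or.inl h1)
        · exact key a (Or.inr (ha h1))
      have hb' : b = bot' ∨ b = top' := by
        by_cases h1 : Quotient.mk (sSetoid n n r) b = bq
        · exact key b (Or.inl h1)
        · exact key b (Or.inr (hb h1))
      have hne : a ≠ b := by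
        intro hcon
        rw [hcon, hammingDist_self] at hdist
        omega
      have hdbt := dist_bot_top hr2 hbot htop
      rcases ha' with rfl | rfl <;> rcases hb' with rfl | rfl
      · exact hne rfl
      · rw [hdbt] at hdist; omega
      · rw [hammingDist_comm, hdbt] at hdist; omega
      · exact hne rfl

lemma ISlice_le_PId (hn : 3 ≤ n) (hr1 : ∀ i, 1 ≤ r i) (hr2 : ∀ i, 2 ≤ r i)
    {t : ℕ} {bot' top' : Idx n r} (hbot : ∀ i, (bot' i : ℕ) = 0)
    (htop : ∀ i, (top' i : ℕ) = r i - 1) :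
    ISlice k n t r ≤ PId k (Quotient.mk (sSetoid n n r) bot')
      (Quotient.mk (sSetoid n n r) top') := by
  rw [ISlice, Ideal.span_le]
  rintro f ⟨i, a, b, hit, hd, rfl⟩
  simp only [SetLike.mem_coe]
  unfold gminor
  exact Ideal.sub_mem _ (pair_mem_PId hn hr1 hr2 hbot htop hd)
    (pair_mem_PId hn hr1 hr2 hbot htop (by rw [dist_sw]; exact hd))

lemma ISlice_le_ITilde {t : ℕ} : ISlice k n t r ≤ ITilde k n t r := by
  rw [ISlice, Ideal.span_le]
  rintro f ⟨i, a, b, hit, hd, rfl⟩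
  exact gminor_mem_ITilde i hit a b


lemma exists_R1 (hn : 2 ≤ n) (hr2 : ∀ i, 2 ≤ r i) (hr1 : ∀ i, 1 ≤ r i) {u : ℕ}
    (hu : u + 2 ≤ msum n r) :
    ∃ a b : Idx n r, hammingDist a b = 2 ∧ wsum a = u ∧ wsum b = u + 2 ∧
      wsum (sw ⟨0, by omega⟩ a b) = u + 1 ∧ wsum (sw ⟨0, by omega⟩ b a) = u + 1 := by
  set i0 : Fin n := ⟨0, by omega⟩ with hi0
  set i1 : Fin n := ⟨1, by omega⟩ with hi1
  have hi01 : i0 ≠ i1 := by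
    intro h
    have := congrArg Fin.val h
    simp [hi0, hi1] at this
  set C : Fin n → ℕ := fun i => if i = i0 ∨ i = i1 then r i - 2 else r i - 1 with hC
  have hCle : ∀ i, C i ≤ r i - 1 := by
    intro i
    simp only [hC]
    split_ifs <;> omega
  have hCsum : ∑ i, C i + 2 = msum n r := by
    have h1 := sum_split C i0
    have h2 := sum_split (fun i => r i - 1) i0
    have hmem : i1 ∈ Finset.univ.erase i0 :=
      Finset.mem_erase.mpr ⟨Ne.symm hi01, Finset.mem_univ i1⟩
    have h3 := (Finset.add_sum_erase _ C hmem).symm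
    have h4 := (Finset.add_sum_erase _ (fun i => r i - 1) hmem).symm
    have h5 : ∑ i ∈ (Finset.univ.erase i0).erase i1, C i
        = ∑ i ∈ (Finset.univ.erase i0).erase i1, (r i - 1) := by
      refine Finset.sum_congr rfl fun j hj => ?_
      have hj1 := Finset.ne_of_mem_erase hj
      have hj0 := Finset.ne_of_mem_erase (Finset.mem_of_mem_erase hj)
      simp only [hC]
      rw [if_neg (by tauto : ¬(j = i0 ∨ j = i1))]
    have hC0 : C i0 = r i0 - 2 := by simp [hC]
    have hC1 : C i1 = r i1 - 2 := by simp [hC]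
    have hri0 := hr2 i0
    have hri1 := hr2 i1
    unfold msum
    omega
  obtain ⟨a, hau, haC⟩ := exists_fill hr1 C hCle u (by omega)
  have hstep : ∀ j : Fin n, j = i0 ∨ j = i1 → (a j : ℕ) + 1 < r j := by
    intro j hj
    have h1 := haC j
    simp only [hC] at h1
    rw [if_pos hj] at h1
    have := hr2 j
    omega
  set b : Idx n r := fun j =>
    if h : j = i0 ∨ j = i1 then ⟨(a j : ℕ) + 1, hstep j h⟩ else a j with hb
  have hbv : ∀ j, (b j : ℕ) = (a j : ℕ) + (if j = i0 ∨ j = i1 then 1 else 0) := by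
    intro j
    simp only [hb]
    split_ifs with h
    · rfl
    · rw [add_zero]
  have hfilter : (Finset.univ.filter fun j : Fin n => j = i0 ∨ j = i1) = {i0, i1} := by
    ext j
    simp [Finset.mem_insert]
  have hwb : wsum b = u + 2 := by
    unfold wsum
    have h1 : ∀ j ∈ Finset.univ, (b j : ℕ)
        = (a j : ℕ) + (if j = i0 ∨ j = i1 then 1 else 0) := fun j _ => hbv j
    rw [Finset.sum_congr rfl h1, Finset.sum_add_distrib]
    have h2 : (∑ j : Fin n, if j = i0 ∨ j = i1 then 1 else 0)
        = (Finset.univ.filter fun j : Fin n => j = i0 ∨ j = i1).card := by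
      rw [Finset.sum_boole]
      simp
    rw [h2, hfilter, Finset.card_insert_of_notMem (by simp [hi01]),
      Finset.card_singleton]
    unfold wsum at hau
    omega
  have hdist : hammingDist a b = 2 := by
    unfold hammingDist
    have : (Finset.univ.filter fun j => a j ≠ b j) = {i0, i1} := by
      ext j
      simp only [Finset.mem_filter, Finset.mem_univ, true_and, Finset.mem_insert,
        Finset.mem_singleton]
      constructor
      · intro hne
        by_contra hcon
        push_neg at hcon
        have := hbv j
        rw [if_neg (by tauto)] at this
        exact hne (Fin.ext (by omega)).symm
      · intro hj
        intro hcon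
        have h1 := congrArg Fin.val hcon
        have := hbv j
        rw [if_pos (by tauto)] at this
        omega
    rw [this, Finset.card_insert_of_notMem (by simp [hi01]), Finset.card_singleton]
  have hbi0 : (b i0 : ℕ) = (a i0 : ℕ) + 1 := by
    have := hbv i0
    rwa [if_pos (Or.inl rfl)] at this
  have hsw1 := wsum_sw i0 a b
  have hsw2 := wsum_sw i0 b a
  exact ⟨a, b, hdist, hau, hwb, by omega, by omega⟩


lemma dichotomy (hn : 3 ≤ n) (hr2 : ∀ i, 2 ≤ r i) (hr1 : ∀ i, 1 ≤ r i) {t : ℕ}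
    (ht1 : 1 ≤ t) {bot' top' : Idx n r} (hbot : ∀ i, (bot' i : ℕ) = 0)
    (htop : ∀ i, (top' i : ℕ) = r i - 1)
    (Q : Ideal (MvPolynomial (IQ n n r) k)) (hQp : Q.IsPrime)
    (hQ : ISlice k n t r ≤ Q)
    (hP : ¬ PId k (Quotient.mk (sSetoid n n r) bot')
      (Quotient.mk (sSetoid n n r) top') ≤ Q) :
    ITilde k n t r ≤ Q := by
  set m' := msum n r with hm'
  obtain ⟨f, hfgen, hfQ⟩ := Set.not_subset.mp (fun h => hP (Ideal.span_le.mpr h))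
  obtain ⟨v0, hv0b, hv0t, rfl⟩ := hfgen
  have hwbq : wq (Quotient.mk (sSetoid n n r) bot') = 0 := by
    rw [wq_mk, wsum_bot hbot]
  have hwtq : wq (Quotient.mk (sSetoid n n r) top') = m' := by
    rw [wq_mk, wsum_top htop]
  set c := wq v0 with hc
  have hcm : c ≤ m' := wq_le v0
  have hc0 : 1 ≤ c := by
    rcases Nat.eq_zero_or_pos c with h0 | h
    · exact absurd (wq_inj (by rw [hwbq, ← h0] : wq v0
        = wq (Quotient.mk (sSetoid n n r) bot'))) hv0b
    · exact h
  have hcm' : c < m' := by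
    rcases eq_or_lt_of_le hcm with h0 | h
    · exact absurd (wq_inj (by rw [hwtq, ← h0] : wq v0
        = wq (Quotient.mk (sSetoid n n r) top'))) hv0t
    · exact h
  have hYv0 : Y k hr1 c ∉ Q := by
    rw [X_eq_Y' hr1 v0] at hfQ
    exact hfQ
  have hR1 : ∀ u, u + 2 ≤ m' → Y k hr1 u * Y k hr1 (u + 2)
      - Y k hr1 (u + 1) * Y k hr1 (u + 1) ∈ Q := by
    intro u hu
    obtain ⟨a, b, hd, ha, hb, hs1, hs2⟩ := exists_R1 (by omega) hr2 hr1 hu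
    have hmem : gminor k n ⟨0, by omega⟩ a b ∈ Q :=
      hQ (Ideal.subset_span ⟨⟨0, by omega⟩, a, b, (by omega : (0:ℕ) < t), hd, rfl⟩)
    rw [gminor_eq hr1, ha, hb, hs1, hs2] at hmem
    exact hmem
  have hstep : ∀ u, 0 < u → u < m' → Y k hr1 u ∉ Q →
      Y k hr1 (u - 1) ∉ Q ∧ Y k hr1 (u + 1) ∉ Q := by
    intro u h0 h1 hYu
    have h2 := hR1 (u - 1) (by omega)
    have e1 : u - 1 + 2 = u + 1 := by omega
    have e2 : u - 1 + 1 = u := by omega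
    rw [e1, e2] at h2
    constructor
    · intro hin
      have h3 : Y k hr1 (u - 1) * Y k hr1 (u + 1) ∈ Q := Ideal.mul_mem_right _ _ hin
      have h4 : Y k hr1 u * Y k hr1 u
          = Y k hr1 (u - 1) * Y k hr1 (u + 1)
            - (Y k hr1 (u - 1) * Y k hr1 (u + 1) - Y k hr1 u * Y k hr1 u) := by ring
      have h5 : Y k hr1 u * Y k hr1 u ∈ Q := by rw [h4]; exact Ideal.sub_mem _ h3 h2
      rcases hQp.mem_or_mem h5 with h | h <;> exact hYu h
    · intro hin
      have h3 : Y k hr1 (u - 1) * Y k hr1 (u + 1) ∈ Q := Ideal.mul_mem_left _ _ hin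
      have h4 : Y k hr1 u * Y k hr1 u
          = Y k hr1 (u - 1) * Y k hr1 (u + 1)
            - (Y k hr1 (u - 1) * Y k hr1 (u + 1) - Y k hr1 u * Y k hr1 u) := by ring
      have h5 : Y k hr1 u * Y k hr1 u ∈ Q := by rw [h4]; exact Ideal.sub_mem _ h3 h2
      rcases hQp.mem_or_mem h5 with h | h <;> exact hYu h
  have hnz : ∀ u, u ≤ m' → Y k hr1 u ∉ Q := by
    have hup : ∀ j, c + j ≤ m' → Y k hr1 (c + j) ∉ Q := by
      intro j
      induction j with
      | zero => intro _; simpa using hYv0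
      | succ j ih =>
        intro hj
        have h3 := (hstep (c + j) (by omega) (by omega) (ih (by omega))).2
        have e : c + j + 1 = c + (j + 1) := by omega
        rwa [e] at h3
    have hdown : ∀ j, j ≤ c → Y k hr1 (c - j) ∉ Q := by
      intro j
      induction j with
      | zero => intro _; simpa using hYv0
      | succ j ih =>
        intro hj
        have h3 := (hstep (c - j) (by omega) (by omega) (ih (by omega))).1
        have e : c - j - 1 = c - (j + 1) := by omega
        rwa [e] at h3
    intro u hu
    rcases le_total u c with h | h
    · have h3 := hdown (c - u) (by omega)
      have e : c - (c - u) = u := by omega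
      rwa [e] at h3
    · have h3 := hup (u - c) (by omega)
      have e : c + (u - c) = u := by omega
      rwa [e] at h3
  have hADJ : ∀ g p q, p + 2 ≤ q → q ≤ m' → q - p ≤ g →
      Y k hr1 p * Y k hr1 q - Y k hr1 (p + 1) * Y k hr1 (q - 1) ∈ Q := by
    intro g
    induction g with
    | zero => intro p q h1 h2 h3; exact absurd h3 (by omega)
    | succ g ih =>
      intro p q h1 h2 h3
      by_cases he : q = p + 2
      · subst he
        have e : p + 2 - 1 = p + 1 := by omega
        rw [e]
        exact hR1 p h2
      · have hIH := ih (p + 1) q (by omega) h2 (by omega)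
        have e : p + 1 + 1 = p + 2 := by omega
        rw [e] at hIH
        have hR := hR1 p (by omega)
        have heq : Y k hr1 (p + 1)
            * (Y k hr1 p * Y k hr1 q - Y k hr1 (p + 1) * Y k hr1 (q - 1))
            = Y k hr1 p * (Y k hr1 (p + 1) * Y k hr1 q
                - Y k hr1 (p + 2) * Y k hr1 (q - 1))
              + Y k hr1 (q - 1) * (Y k hr1 p * Y k hr1 (p + 2)
                - Y k hr1 (p + 1) * Y k hr1 (p + 1)) := by ring
        have hmul : Y k hr1 (p + 1)
            * (Y k hr1 p * Y k hr1 q - Y k hr1 (p + 1) * Y k hr1 (q - 1)) ∈ Q := by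
          rw [heq]
          exact Ideal.add_mem _ (Ideal.mul_mem_left _ _ hIH) (Ideal.mul_mem_left _ _ hR)
        rcases hQp.mem_or_mem hmul with h | h
        · exact absurd h (hnz (p + 1) (by omega))
        · exact h
  have hstepQ : ∀ p q, p + 2 ≤ q → q ≤ m' → ∃ w1 w2, w1 ≤ w2 ∧ w2 ≤ m' ∧
      w1 + w2 = p + q ∧ w2 - w1 + 2 ≤ q - p ∧
      Y k hr1 p * Y k hr1 q - Y k hr1 w1 * Y k hr1 w2 ∈ Q := fun p q h1 h2 =>
    ⟨p + 1, q - 1, by omega, by omega, by omega, by omega, hADJ (q - p) p q h1 h2 le_rfl⟩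
  rw [ITilde, Ideal.span_le]
  rintro f ⟨i, a, b, hit, rfl⟩
  simp only [SetLike.mem_coe]
  rw [gminor_eq hr1]
  exact hankel_gen hr1 m' Q hstepQ (wsum_le a) (wsum_le b) (wsum_le _) (wsum_le _)
    (wsum_sw_add i a b).symm


lemma n_le_msum (hr2 : ∀ i, 2 ≤ r i) : n ≤ msum n r := by
  have h1 : ∑ _i : Fin n, 1 ≤ ∑ i, (r i - 1) :=
    Finset.sum_le_sum fun i _ => by have := hr2 i; omega
  simpa [msum] using h1

section Assembly

variable {K : Type} [Field K]

lemma ITilde_eq_ker' (hn : 3 ≤ n) (hr2 : ∀ i, 2 ≤ r i) (hr1 : ∀ i, 1 ≤ r i)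
    {t : ℕ} (ht1 : 1 ≤ t) :
    ITilde K n t r = RingHom.ker (phi K n r).toRingHom :=
  le_antisymm ITilde_le_ker (ker_le_ITilde (by omega) hr2 hr1 ht1)

lemma ITilde_isPrime (hn : 3 ≤ n) (hr2 : ∀ i, 2 ≤ r i) (hr1 : ∀ i, 1 ≤ r i)
    {t : ℕ} (ht1 : 1 ≤ t) : (ITilde K n t r).IsPrime := by
  rw [ITilde_eq_ker' hn hr2 hr1 ht1]
  exact RingHom.ker_isPrime _

lemma PId_isPrime (bq tq : IQ n n r) : (PId K bq tq).IsPrime := by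
  rw [PId_eq_ker]
  exact RingHom.ker_isPrime _

/-- a middle variable lies in `P` but not in `ITilde`. -/
lemma exists_P_not_T (hn : 3 ≤ n) (hr2 : ∀ i, 2 ≤ r i) (hr1 : ∀ i, 1 ≤ r i)
    {t : ℕ} (ht1 : 1 ≤ t) {bot' top' : Idx n r} (hbot : ∀ i, (bot' i : ℕ) = 0)
    (htop : ∀ i, (top' i : ℕ) = r i - 1) :
    ∃ x, x ∈ PId K (Quotient.mk (sSetoid n n r) bot')
        (Quotient.mk (sSetoid n n r) top') ∧ x ∉ ITilde K n t r := by
  have hm3 : 3 ≤ msum n r := le_trans hn (n_le_msum hr2)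
  set v1 : IQ n n r := Quotient.mk (sSetoid n n r) (rep hr1 1) with hv1
  have hwv1 : wq v1 = 1 := wq_rep hr1 (by omega)
  refine ⟨MvPolynomial.X v1, X_mem_PId ?_ ?_, ?_⟩
  · intro hcon
    have := congrArg wq hcon
    rw [hwv1, wq_mk, wsum_bot hbot] at this
    omega
  · intro hcon
    have := congrArg wq hcon
    rw [hwv1, wq_mk, wsum_top htop] at this
    omega
  · rw [ITilde_eq_ker' hn hr2 hr1 ht1]
    intro hcon
    have h0 : phi K n r (MvPolynomial.X v1) = 0 := hcon
    rw [phi_X, hwv1, XX_monomial] at h0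
    exact one_ne_zero (MvPolynomial.monomial_eq_zero.mp h0)

/-- the extreme minor lies in `ITilde` but not in `P`. -/
lemma exists_T_not_P (hn : 3 ≤ n) (hr2 : ∀ i, 2 ≤ r i) (hr1 : ∀ i, 1 ≤ r i)
    {t : ℕ} (ht1 : 1 ≤ t) {bot' top' : Idx n r} (hbot : ∀ i, (bot' i : ℕ) = 0)
    (htop : ∀ i, (top' i : ℕ) = r i - 1) :
    ∃ x, x ∈ ITilde K n t r ∧ x ∉ PId K (Quotient.mk (sSetoid n n r) bot')
      (Quotient.mk (sSetoid n n r) top') := by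
  set i0 : Fin n := ⟨0, by omega⟩ with hi0
  set bq := Quotient.mk (sSetoid n n r) bot' with hbq
  set tq := Quotient.mk (sSetoid n n r) top' with htq
  have hmp := mprime_pos (by omega) hr2 i0
  have hri0 := hr2 i0
  refine ⟨gminor K n i0 bot' top', gminor_mem_ITilde i0 (lt_of_lt_of_le Nat.zero_lt_one ht1 : (0:ℕ) < t) bot' top', ?_⟩
  have hs1 : wsum (sw i0 bot' top') = r i0 - 1 := by
    have h1 := wsum_sw i0 bot' top'
    rw [wsum_bot hbot, hbot i0, htop i0] at h1
    omega
  have hs2 : wsum (sw i0 top' bot') = msum n r - (r i0 - 1) := by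
    have h1 := wsum_sw_add i0 bot' top'
    rw [wsum_bot hbot, wsum_top htop] at h1
    omega
  intro hcon
  rw [PId_eq_ker] at hcon
  have h0 : psi K bq tq (gminor K n i0 bot' top') = 0 := hcon
  unfold gminor xvar at h0
  rw [map_sub, map_mul, map_mul] at h0
  rw [psi_X_of_mem (Or.inl hbq.symm), psi_X_of_mem (Or.inr htq.symm)] at h0
  have hz1 : psi K bq tq (MvPolynomial.X
      (Quotient.mk (sSetoid n n r) (sw i0 bot' top'))) = 0 := by
    refine psi_X_of_not_mem ?_ ?_
    · rw [Ne, hbq, mk_eq_mk_iff, hs1, wsum_bot hbot]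
      omega
    · rw [Ne, htq, mk_eq_mk_iff, hs1, wsum_top htop]
      omega
  rw [hz1, zero_mul, sub_zero] at h0
  rw [show (MvPolynomial.X bq : MvPolynomial (IQ n n r) K) = MvPolynomial.X bq ^ 1
    from (pow_one _).symm, show (MvPolynomial.X tq : MvPolynomial (IQ n n r) K)
    = MvPolynomial.X tq ^ 1 from (pow_one _).symm, ← monomial_decomp2] at h0
  exact one_ne_zero (MvPolynomial.monomial_eq_zero.mp h0)

end Assembly

end SliceAux

/-- for `n ≥ 3` and `s = n`, the ideal `I(n,t)` has exactly two minimal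
primes: `Ĩ(n,t)` and the monomial prime generated by all variables `x_a` with `a` not
`n`-equivalent to `(1,…,1)` or `(r 1,…,r n)`. -/
theorem minimalPrimes_s_eq_n (k : Type) [Field k] (n t : ℕ) (r : Fin n → ℕ)
    (hn : 3 ≤ n) (hr : ∀ i, 2 ≤ r i) (ht1 : 1 ≤ t) (htn : t ≤ n)
    (bot top : Idx n r) (hbot : ∀ i, (bot i : ℕ) = 0) (htop : ∀ i, (top i : ℕ) = r i - 1) :
    (ISlice k n t r).minimalPrimes =
      {ITilde k n t r,
        Ideal.span {f | ∃ v : IQ n n r,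
          v ≠ Quotient.mk (sSetoid n n r) bot ∧ v ≠ Quotient.mk (sSetoid n n r) top ∧
          f = MvPolynomial.X v}} := by
  have hr1 : ∀ i, 1 ≤ r i := fun i => le_trans one_le_two (hr i)
  set bq := Quotient.mk (sSetoid n n r) bot with hbq
  set tq := Quotient.mk (sSetoid n n r) top with htq
  have hPdef : Ideal.span {f | ∃ v : IQ n n r, v ≠ bq ∧ v ≠ tq ∧ f = MvPolynomial.X v}
      = SliceAux.PId k bq tq := rfl
  rw [hPdef]
  have hTp := SliceAux.ITilde_isPrime (K := k) (r := r) hn hr hr1 ht1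
  have hPp := SliceAux.PId_isPrime (K := k) bq tq
  have hIT : ISlice k n t r ≤ ITilde k n t r := SliceAux.ISlice_le_ITilde
  have hIP : ISlice k n t r ≤ SliceAux.PId k bq tq :=
    SliceAux.ISlice_le_PId hn hr1 hr hbot htop
  obtain ⟨xP, hxPP, hxPT⟩ := SliceAux.exists_P_not_T (K := k) hn hr hr1 ht1 hbot htop
  obtain ⟨xT, hxTT, hxTP⟩ := SliceAux.exists_T_not_P (K := k) hn hr hr1 ht1 hbot htop
  have dich : ∀ Q : Ideal (MvPolynomial (IQ n n r) k), Q.IsPrime → ISlice k n t r ≤ Q →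
      ITilde k n t r ≤ Q ∨ SliceAux.PId k bq tq ≤ Q := by
    intro Q hQp hQ
    by_cases hP : SliceAux.PId k bq tq ≤ Q
    · exact Or.inr hP
    · exact Or.inl (SliceAux.dichotomy hn hr hr1 ht1 hbot htop Q hQp hQ hP)
  ext J
  simp only [Set.mem_insert_iff, Set.mem_singleton_iff]
  constructor
  · intro hJ
    obtain ⟨⟨hJp, hIJ⟩, hJmin⟩ := hJ
    rcases dich J hJp hIJ with hTJ | hPJ
    · left
      exact le_antisymm (hJmin ⟨hTp, hIT⟩ hTJ) hTJ
    · right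
      exact le_antisymm (hJmin ⟨hPp, hIP⟩ hPJ) hPJ
  · intro hJ
    rcases hJ with rfl | rfl
    · refine ⟨⟨hTp, hIT⟩, ?_⟩
      intro y hy hyT
      rcases dich y hy.1 hy.2 with h | h
      · exact h
      · exact absurd (hyT (h hxPP)) hxPT
    · refine ⟨⟨hPp, hIP⟩, ?_⟩
      intro y hy hyP
      rcases dich y hy.1 hy.2 with h | h
      · exact absurd (hyP (h hxTT)) hxTP
      · exact h
end
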